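/- arXiv:1210.2379 — 4 statements merged into one kernel-verified Lean document; each statement's English description precedes it below -/
import Mathlib

section
/- Let X be a real Banach space with a normalized 1-symmetric basis (e_n) such that ℓ¹ does not embed isomorphically into X. Then for every ε > 0 there exists δ > 0 such that for every finite scalar family (α_i)_{i=1}^k with Σ_{i=1}^k |α_i| ≤ 1 and max_{i≤k} |α_i| ≤ δ one has ‖Σ_{i=1}^k α_i e_i‖_X < ε. -/
open MeasureTheory

noncomputable section

/-- `e` is a normalized 1-symmetric (Schauder) basis of `X`: each `e n` has norm one,
its linear span is dense, and the norm of finite linear combinations is invariant under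
permutations of the indices and changes of signs of the coefficients. -/
def IsSymmetricBasis {X : Type*} [NormedAddCommGroup X] [NormedSpace ℝ X] (e : ℕ → X) : Prop :=
  (∀ n, ‖e n‖ = 1) ∧
  Dense (Submodule.span ℝ (Set.range e) : Set X) ∧
  ∀ (a : ℕ →₀ ℝ) (π : Equiv.Perm ℕ) (ε : ℕ → ℝ), (∀ n, ε n = 1 ∨ ε n = -1) →
    ‖a.sum fun n c => (ε n * c) • e (π n)‖ = ‖a.sum fun n c => c • e n‖

namespace SmallCoeffAux

variable {X : Type*} [NormedAddCommGroup X] [NormedSpace ℝ X]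

theorem sym (e : ℕ → X) (he : IsSymmetricBasis e) (n : ℕ) (c : ℕ → ℝ)
    (hc : ∀ i, n ≤ i → c i = 0) (π : Equiv.Perm ℕ) (ε : ℕ → ℝ)
    (hε : ∀ i, ε i = 1 ∨ ε i = -1) :
    ‖∑ i ∈ Finset.range n, (ε i * c i) • e (π i)‖ = ‖∑ i ∈ Finset.range n, c i • e i‖ := by
  have hsupp : ∀ a, c a ≠ 0 → a ∈ Finset.range n := by
    intro a ha
    by_contra h
    exact ha (hc a (by simpa using h))
  set b : ℕ →₀ ℝ := Finsupp.onFinset (Finset.range n) c hsupp with hb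
  have h1 : (b.sum fun i t => t • e i) = ∑ i ∈ Finset.range n, c i • e i := by
    rw [Finsupp.sum_of_support_subset b Finsupp.support_onFinset_subset
      (fun i t => t • e i) (fun i _ => zero_smul ℝ _)]
    rfl
  have h2 : (b.sum fun i t => (ε i * t) • e (π i))
      = ∑ i ∈ Finset.range n, (ε i * c i) • e (π i) := by
    rw [Finsupp.sum_of_support_subset b Finsupp.support_onFinset_subset
      (fun i t => (ε i * t) • e (π i)) (fun i _ => by simp)]
    rfl
  rw [← h1, ← h2, he.2.2 b π ε hε]


/-- Decompose a sum over `range (k*m)` into consecutive blocks of length `m`. -/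
theorem sum_range_mul_eq {M : Type*} [AddCommMonoid M] (g : ℕ → M) (k m : ℕ) :
    ∑ i ∈ Finset.range (k * m), g i
      = ∑ j ∈ Finset.range k, ∑ i ∈ Finset.Ico (j * m) (j * m + m), g i := by
  induction k with
  | zero => simp only [Nat.zero_mul, Finset.range_zero, Finset.sum_empty]
  | succ k ih =>
    have hmm : (k + 1) * m = k * m + m := by ring
    rw [Finset.sum_range_succ, ← ih, hmm, Finset.range_eq_Ico,
      ← Finset.sum_Ico_consecutive g (Nat.zero_le _) (Nat.le_add_right _ _),
      ← Finset.range_eq_Ico]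

/-- Domination: for a 1-unconditional system, `|a i| ≤ b i` implies the norm inequality. -/
theorem dom (e : ℕ → X) (he : IsSymmetricBasis e) (n : ℕ) (a b : ℕ → ℝ)
    (hab : ∀ i, |a i| ≤ b i) :
    ‖∑ i ∈ Finset.range n, a i • e i‖ ≤ ‖∑ i ∈ Finset.range n, b i • e i‖ := by
  suffices H : ∀ m, ‖∑ i ∈ Finset.range n, (if i < m then a i else b i) • e i‖
      ≤ ‖∑ i ∈ Finset.range n, b i • e i‖ by
    have := H n
    have hEq : ∑ i ∈ Finset.range n, (if i < n then a i else b i) • e i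
        = ∑ i ∈ Finset.range n, a i • e i :=
      Finset.sum_congr rfl fun i hi => by rw [if_pos (Finset.mem_range.mp hi)]
    rwa [hEq] at this
  intro m
  induction m with
  | zero =>
    apply le_of_eq
    have : ∑ i ∈ Finset.range n, (if i < 0 then a i else b i) • e i
        = ∑ i ∈ Finset.range n, b i • e i :=
      Finset.sum_congr rfl fun i hi => by rw [if_neg (by omega)]
    rw [this]
  | succ m ih =>
    refine le_trans ?_ ih
    by_cases hmn : n ≤ m
    · apply le_of_eq
      have hEq : ∑ i ∈ Finset.range n, (if i < m + 1 then a i else b i) • e i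
          = ∑ i ∈ Finset.range n, (if i < m then a i else b i) • e i :=
        Finset.sum_congr rfl fun i hi => by
          have hi' := Finset.mem_range.mp hi
          rw [if_pos (by omega), if_pos (by omega)]
      rw [hEq]
    · push_neg at hmn
      have hmem : m ∈ Finset.range n := Finset.mem_range.mpr hmn
      set c : ℕ → ℝ := fun i => if i < m then a i else b i with hc
      set v : X := ∑ i ∈ (Finset.range n).erase m, c i • e i with hv
      have hsum1 : ∑ i ∈ Finset.range n, c i • e i = b m • e m + v := by
        rw [hv, ← Finset.add_sum_erase _ _ hmem]
        rw [show c m = b m from if_neg (by omega)]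
      have hsum2 : ∑ i ∈ Finset.range n, (if i < m + 1 then a i else b i) • e i
          = a m • e m + v := by
        rw [← Finset.add_sum_erase _ _ hmem]
        congr 1
        · rw [if_pos (by omega)]
        · refine Finset.sum_congr rfl fun i hi => ?_
          have hi' := Finset.mem_erase.mp hi
          have hne : i ≠ m := hi'.1
          congr 1
          by_cases h : i < m
          · rw [if_pos (by omega : i < m + 1), show c i = a i from if_pos h]
          · rw [if_neg (by omega : ¬ i < m + 1), show c i = b i from if_neg h]
      have hflip : ‖(-(b m)) • e m + v‖ = ‖b m • e m + v‖ := by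
        have hc0 : ∀ i, n ≤ i → (if i < n then c i else 0) = 0 := fun i hi => by
          rw [if_neg (by omega)]
        have := sym e he n (fun i => if i < n then c i else 0)
          hc0 (Equiv.refl ℕ) (fun i => if i = m then -1 else 1)
          (fun i => by by_cases h : i = m <;> simp [h])
        have hL : ∑ i ∈ Finset.range n,
            ((if i = m then (-1:ℝ) else 1) * (if i < n then c i else 0)) • e ((Equiv.refl ℕ) i)
            = (-(b m)) • e m + v := by
          rw [← Finset.add_sum_erase _ _ hmem]
          congr 1
          · have hcm : c m = b m := if_neg (by omega)
            simp [hcm, hmn]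
          · refine Finset.sum_congr rfl fun i hi => ?_
            have hi' := Finset.mem_erase.mp hi
            have hin := Finset.mem_range.mp hi'.2
            rw [if_neg hi'.1, if_pos hin, one_mul]
            rfl
        have hR : ∑ i ∈ Finset.range n, (if i < n then c i else 0) • e i
            = b m • e m + v := by
          rw [← hsum1]
          refine Finset.sum_congr rfl fun i hi => ?_
          rw [if_pos (Finset.mem_range.mp hi)]
        beta_reduce at this
        rw [hL, hR] at this
        exact this
      rw [hsum1, hsum2]
      have hbm : |a m| ≤ b m := hab m
      by_cases hb0 : b m = 0
      · have : a m = 0 := by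
          have := hab m
          rw [hb0] at this
          have := abs_nonneg (a m)
          nlinarith [abs_nonneg (a m), hab m, neg_abs_le (a m), le_abs_self (a m)]
        rw [this, hb0]
      · have hbpos : 0 < b m := lt_of_le_of_ne (le_trans (abs_nonneg _) hbm) (Ne.symm hb0)
        set t : ℝ := a m / b m with ht
        have hta : a m = t * b m := by rw [ht, div_mul_cancel₀ _ hb0]
        have ht1 : |t| ≤ 1 := by
          rw [ht, abs_div, abs_of_pos hbpos, div_le_one hbpos]
          exact hbm
        have hid : a m • e m + v = ((1 + t)/2) • (b m • e m + v)
            + ((1 - t)/2) • ((-(b m)) • e m + v) := by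
          rw [hta]
          module
        rw [hid]
        calc ‖((1 + t)/2) • (b m • e m + v) + ((1 - t)/2) • ((-(b m)) • e m + v)‖
            ≤ ‖((1 + t)/2) • (b m • e m + v)‖ + ‖((1 - t)/2) • ((-(b m)) • e m + v)‖ :=
              norm_add_le _ _
          _ = |(1 + t)/2| * ‖b m • e m + v‖ + |(1 - t)/2| * ‖(-(b m)) • e m + v‖ := by
              rw [norm_smul, norm_smul, Real.norm_eq_abs, Real.norm_eq_abs]
          _ = ‖b m • e m + v‖ := by
              rw [hflip]
              have h1 : |(1 + t)/2| = (1 + t)/2 := abs_of_nonneg (by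
                have := abs_le.mp ht1; linarith)
              have h2 : |(1 - t)/2| = (1 - t)/2 := abs_of_nonneg (by
                have := abs_le.mp ht1; linarith)
              rw [h1, h2]
              ring

/-- Shifting a block of coefficients. -/
theorem shift (e : ℕ → X) (he : IsSymmetricBasis e) (m s : ℕ) (hs : s = 0 ∨ m ≤ s)
    (c : ℕ → ℝ) :
    ‖∑ i ∈ Finset.range m, c i • e (s + i)‖ = ‖∑ i ∈ Finset.range m, c i • e i‖ := by
  set f : ℕ → ℕ := fun i => if i < m then s + i else if s ≤ i ∧ i < s + m then i - s else i
    with hf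
  have hinv : Function.Involutive f := by
    intro i
    simp only [hf]
    rcases hs with h | h <;> split_ifs <;> omega
  set π : Equiv.Perm ℕ := hinv.toPerm f with hπ
  have hπa : ∀ i, i < m → π i = s + i := fun i hi => by
    simp only [hπ, Function.Involutive.coe_toPerm, hf, if_pos hi]
  have := sym e he m (fun i => if i < m then c i else 0)
    (fun i hi => by show (if i < m then c i else 0) = 0; rw [if_neg (by omega)]) π
    (fun _ => 1) (fun _ => Or.inl rfl)
  have hL : ∑ i ∈ Finset.range m, ((1:ℝ) * (if i < m then c i else 0)) • e (π i)
      = ∑ i ∈ Finset.range m, c i • e (s + i) := by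
    refine Finset.sum_congr rfl fun i hi => ?_
    have hi' := Finset.mem_range.mp hi
    rw [one_mul, if_pos hi', hπa i hi']
  have hR : ∑ i ∈ Finset.range m, (if i < m then c i else 0) • e i
      = ∑ i ∈ Finset.range m, c i • e i := by
    refine Finset.sum_congr rfl fun i hi => ?_
    rw [if_pos (Finset.mem_range.mp hi)]
  beta_reduce at this
  rw [hL, hR] at this
  exact this


theorem cyclic (e : ℕ → X) (he : IsSymmetricBasis e) (n : ℕ) (hn : 0 < n)
    (b : ℕ → ℝ) (hb : ∀ i, 0 ≤ b i) :
    (∑ i ∈ Finset.range n, b i) * ‖∑ i ∈ Finset.range n, e i‖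
      ≤ n * ‖∑ i ∈ Finset.range n, b i • e i‖ := by
  haveI : NeZero n := ⟨hn.ne'⟩
  set π : Fin n → Equiv.Perm ℕ :=
    fun k => (Equiv.addLeft k).extendDomain (Fin.equivSubtype) with hπdef
  have hπ : ∀ (k : Fin n) (i : ℕ) (h : i < n), π k i = ((k + ⟨i, h⟩ : Fin n) : ℕ) := by
    intro k i h
    simp only [hπdef]
    rw [Equiv.Perm.extendDomain_apply_subtype _ Fin.equivSubtype h]
    rfl
  have hkey : ∑ k : Fin n, ∑ i ∈ Finset.range n, b i • e (π k i)
      = (∑ i ∈ Finset.range n, b i) • (∑ j ∈ Finset.range n, e j) := by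
    rw [Finset.sum_comm, Finset.sum_smul]
    refine Finset.sum_congr rfl fun i hi => ?_
    have hin := Finset.mem_range.mp hi
    rw [← Finset.smul_sum]
    congr 1
    calc ∑ k : Fin n, e (π k i) = ∑ k : Fin n, e ((k + ⟨i, hin⟩ : Fin n) : ℕ) :=
          Finset.sum_congr rfl fun k _ => by rw [hπ k i hin]
      _ = ∑ j : Fin n, e (j : ℕ) :=
          Fintype.sum_equiv (Equiv.addRight (⟨i, hin⟩ : Fin n)) _ _ (fun k => rfl)
      _ = ∑ j ∈ Finset.range n, e j := Fin.sum_univ_eq_sum_range _ n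
  have hEq : ∀ k : Fin n, ‖∑ i ∈ Finset.range n, b i • e (π k i)‖
      = ‖∑ i ∈ Finset.range n, b i • e i‖ := by
    intro k
    have := sym e he n (fun i => if i < n then b i else 0)
      (fun i hi => by show (if i < n then b i else 0) = 0; rw [if_neg (by omega)]) (π k)
      (fun _ => 1) (fun _ => Or.inl rfl)
    beta_reduce at this
    have hL : ∑ i ∈ Finset.range n, ((1:ℝ) * if i < n then b i else 0) • e (π k i)
        = ∑ i ∈ Finset.range n, b i • e (π k i) :=
      Finset.sum_congr rfl fun i hi => by rw [one_mul, if_pos (Finset.mem_range.mp hi)]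
    have hR : ∑ i ∈ Finset.range n, (if i < n then b i else 0) • e i
        = ∑ i ∈ Finset.range n, b i • e i :=
      Finset.sum_congr rfl fun i hi => by rw [if_pos (Finset.mem_range.mp hi)]
    rw [hL, hR] at this
    exact this
  have hsum_nonneg : 0 ≤ ∑ i ∈ Finset.range n, b i :=
    Finset.sum_nonneg fun i _ => hb i
  calc (∑ i ∈ Finset.range n, b i) * ‖∑ i ∈ Finset.range n, e i‖
      = ‖(∑ i ∈ Finset.range n, b i) • (∑ j ∈ Finset.range n, e j)‖ := by
        rw [norm_smul, Real.norm_eq_abs, abs_of_nonneg hsum_nonneg]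
    _ = ‖∑ k : Fin n, ∑ i ∈ Finset.range n, b i • e (π k i)‖ := by rw [hkey]
    _ ≤ ∑ k : Fin n, ‖∑ i ∈ Finset.range n, b i • e (π k i)‖ := norm_sum_le _ _
    _ = ∑ k : Fin n, ‖∑ i ∈ Finset.range n, b i • e i‖ :=
        Finset.sum_congr rfl fun k _ => hEq k
    _ = n * ‖∑ i ∈ Finset.range n, b i • e i‖ := by
        rw [Finset.sum_const, Finset.card_univ, Fintype.card_fin, nsmul_eq_mul]

theorem phi_mono (e : ℕ → X) (he : IsSymmetricBasis e) {n m : ℕ} (hnm : n ≤ m) :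
    ‖∑ i ∈ Finset.range n, e i‖ ≤ ‖∑ i ∈ Finset.range m, e i‖ := by
  have h := dom e he m (fun i => if i < n then 1 else 0) (fun _ => 1)
    (fun i => by show |if i < n then (1:ℝ) else 0| ≤ 1; split_ifs <;> norm_num)
  have hL : ∑ i ∈ Finset.range m, (if i < n then (1:ℝ) else 0) • e i
      = ∑ i ∈ Finset.range n, e i := by
    rw [← Finset.sum_subset (Finset.range_subset_range.mpr hnm)
      (fun i _ hi => by rw [if_neg (by simpa using hi), zero_smul])]
    exact Finset.sum_congr rfl fun i hi => by
      rw [if_pos (Finset.mem_range.mp hi), one_smul]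
  have hR : ∑ i ∈ Finset.range m, (1:ℝ) • e i = ∑ i ∈ Finset.range m, e i :=
    Finset.sum_congr rfl fun i _ => one_smul ℝ _
  rwa [hL, hR] at h

theorem phi_one (e : ℕ → X) (he : IsSymmetricBasis e) :
    ‖∑ i ∈ Finset.range 1, e i‖ = 1 := by
  simp [he.1 0]


theorem exists_small (e : ℕ → X) (he : IsSymmetricBasis e)
    (hl1 : ¬ ∃ (x : ℕ → X) (c C : ℝ), 0 < c ∧ c ≤ C ∧
        ∀ a : ℕ →₀ ℝ,
          c * (a.sum fun _ t => |t|) ≤ ‖a.sum fun n t => t • x n‖ ∧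
          ‖a.sum fun n t => t • x n‖ ≤ C * (a.sum fun _ t => |t|)) :
    ∀ c : ℝ, 0 < c → ∃ n : ℕ, 0 < n ∧ ‖∑ i ∈ Finset.range n, e i‖ < c * n := by
  intro c hc
  by_contra hcon
  push_neg at hcon
  apply hl1
  refine ⟨e, min c 1, 1, lt_min hc one_pos, min_le_right _ _, ?_⟩
  intro a
  have hupper : ‖a.sum fun n t => t • e n‖ ≤ 1 * (a.sum fun _ t => |t|) := by
    rw [one_mul]
    calc ‖a.sum fun n t => t • e n‖ ≤ ∑ i ∈ a.support, ‖a i • e i‖ := norm_sum_le _ _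
      _ = ∑ i ∈ a.support, |a i| := by
          refine Finset.sum_congr rfl fun i _ => ?_
          rw [norm_smul, Real.norm_eq_abs, he.1 i, mul_one]
      _ = a.sum fun _ t => |t| := rfl
  refine ⟨?_, hupper⟩
  set n := (a.support.sup id) + 1 with hn
  have hsupp : a.support ⊆ Finset.range n := fun i hi =>
    Finset.mem_range.mpr (Nat.lt_succ_of_le (Finset.le_sup (f := id) hi))
  have hzero : ∀ i, n ≤ i → a i = 0 := by
    intro i hi
    by_contra h
    have := hsupp (Finsupp.mem_support_iff.mpr h)
    simp only [Finset.mem_range] at this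
    omega
  have hrepr : (a.sum fun i t => t • e i) = ∑ i ∈ Finset.range n, a i • e i :=
    Finsupp.sum_of_support_subset a hsupp (fun i t => t • e i) (fun i _ => zero_smul ℝ _)
  have hrepr2 : (a.sum fun _ t => |t|) = ∑ i ∈ Finset.range n, |a i| :=
    Finsupp.sum_of_support_subset a hsupp (fun _ t => |t|) (fun i _ => abs_zero)
  have habs : ‖∑ i ∈ Finset.range n, a i • e i‖
      = ‖∑ i ∈ Finset.range n, |a i| • e i‖ := by
    have := sym e he n (⇑a) hzero (Equiv.refl ℕ)
      (fun i => if a i < 0 then -1 else 1)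
      (fun i => by by_cases h : a i < 0 <;> simp [h])
    beta_reduce at this
    have hL : ∑ i ∈ Finset.range n,
        ((if a i < 0 then (-1:ℝ) else 1) * a i) • e ((Equiv.refl ℕ) i)
        = ∑ i ∈ Finset.range n, |a i| • e i := by
      refine Finset.sum_congr rfl fun i _ => ?_
      simp only [Equiv.refl_apply]
      congr 1
      split_ifs with h
      · rw [neg_one_mul, abs_of_neg h]
      · rw [one_mul, abs_of_nonneg (not_lt.mp h)]
    rw [hL] at this
    exact this.symm
  have hlow := cyclic e he n (by omega) (fun i => |a i|) (fun i => abs_nonneg _)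
  have hφn := hcon n (by omega)
  have hsnn : 0 ≤ ∑ i ∈ Finset.range n, |a i| := Finset.sum_nonneg fun i _ => abs_nonneg _
  have hnpos : (0:ℝ) < n := by
    have : 0 < n := by omega
    exact_mod_cast this
  rw [hrepr, hrepr2, habs]
  have hchain : (∑ i ∈ Finset.range n, |a i|) * (c * n)
      ≤ n * ‖∑ i ∈ Finset.range n, |a i| • e i‖ :=
    le_trans (mul_le_mul_of_nonneg_left hφn hsnn) hlow
  have hc2 : c * (∑ i ∈ Finset.range n, |a i|)
      ≤ ‖∑ i ∈ Finset.range n, |a i| • e i‖ := by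
    nlinarith [hchain, hnpos]
  calc min c 1 * (∑ i ∈ Finset.range n, |a i|)
      ≤ c * (∑ i ∈ Finset.range n, |a i|) :=
        mul_le_mul_of_nonneg_right (min_le_left _ _) hsnn
    _ ≤ _ := hc2

end SmallCoeffAux

open SmallCoeffAux in
/-- If `X` is a real Banach space with a normalized 1-symmetric basis
`(e_n)` and `ℓ¹` does not embed isomorphically into `X`, then for every `ε > 0` there is
`δ > 0` such that `‖Σ_{i<k} α_i e_i‖ < ε` whenever `Σ_{i<k} |α_i| ≤ 1` and
`max_i |α_i| ≤ δ`. -/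
theorem small_coeff_small_norm_of_no_ell_one
    {X : Type*} [NormedAddCommGroup X] [NormedSpace ℝ X] [CompleteSpace X]
    (e : ℕ → X) (he : IsSymmetricBasis e)
    (hl1 : ¬ ∃ (x : ℕ → X) (c C : ℝ), 0 < c ∧ c ≤ C ∧
        ∀ a : ℕ →₀ ℝ,
          c * (a.sum fun _ t => |t|) ≤ ‖a.sum fun n t => t • x n‖ ∧
          ‖a.sum fun n t => t • x n‖ ≤ C * (a.sum fun _ t => |t|)) :
    ∀ ε > (0 : ℝ), ∃ δ > (0 : ℝ), ∀ (k : ℕ) (α : Fin k → ℝ),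
      (∑ i, |α i|) ≤ 1 → (∀ i, |α i| ≤ δ) →
      ‖∑ i : Fin k, α i • e (i : ℕ)‖ < ε := by
  intro ε hε
  obtain ⟨m, hm, hφm⟩ := exists_small e he hl1 (ε/4) (by positivity)
  set φm := ‖∑ i ∈ Finset.range m, e i‖ with hφdef
  have hφ1 : (1:ℝ) ≤ φm := by
    have h1 := phi_mono e he hm
    rwa [phi_one e he] at h1
  have hφpos : (0:ℝ) < φm := lt_of_lt_of_le one_pos hφ1
  have hmR : (0:ℝ) < m := by exact_mod_cast hm
  refine ⟨ε / (4 * φm), by positivity, ?_⟩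
  intro k α hsum hmax
  set δ := ε / (4 * φm) with hδdef
  have hδpos : 0 < δ := by positivity
  set σ := Tuple.sort (fun i : Fin k => -|α i|) with hσdef
  have hsort : Monotone ((fun i : Fin k => -|α i|) ∘ σ) := Tuple.monotone_sort _
  set a : ℕ → ℝ := fun i => if h : i < k then |α (σ ⟨i, h⟩)| else 0 with hadef
  have ha0 : ∀ i, 0 ≤ a i := fun i => by
    by_cases h : i < k
    · rw [show a i = |α (σ ⟨i, h⟩)| from dif_pos h]; exact abs_nonneg _
    · rw [show a i = 0 from dif_neg h]
  have haδ : ∀ i, a i ≤ δ := fun i => by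
    by_cases h : i < k
    · rw [show a i = |α (σ ⟨i, h⟩)| from dif_pos h]; exact hmax _
    · rw [show a i = 0 from dif_neg h]; exact hδpos.le
  have hzero : ∀ i, k ≤ i → a i = 0 := fun i hi => dif_neg (by omega)
  have hanti : ∀ i j, i ≤ j → a j ≤ a i := by
    intro i j hij
    by_cases hj : j < k
    · have hi : i < k := lt_of_le_of_lt hij hj
      rw [show a j = |α (σ ⟨j, hj⟩)| from dif_pos hj,
        show a i = |α (σ ⟨i, hi⟩)| from dif_pos hi]
      have := hsort (show (⟨i, hi⟩ : Fin k) ≤ ⟨j, hj⟩ from hij)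
      simpa using this
    · rw [show a j = 0 from dif_neg hj]; exact ha0 i
  have hsum1 : ∑ i ∈ Finset.range k, a i ≤ 1 := by
    have hEq : ∑ i ∈ Finset.range k, a i = ∑ i : Fin k, |α (σ i)| := by
      rw [← Fin.sum_univ_eq_sum_range (fun i => a i) k]
      refine Finset.sum_congr rfl fun i _ => ?_
      exact dif_pos i.2
    rw [hEq, Equiv.sum_comp σ (fun j => |α j|)]
    exact hsum
  have hstart : ‖∑ i : Fin k, α i • e (i : ℕ)‖ = ‖∑ i ∈ Finset.range k, a i • e i‖ := by
    set π : Equiv.Perm ℕ := σ.extendDomain Fin.equivSubtype with hπdef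
    have hπ : ∀ (i : ℕ) (h : i < k), π i = ((σ ⟨i, h⟩ : Fin k) : ℕ) := by
      intro i h
      simp only [hπdef]
      rw [Equiv.Perm.extendDomain_apply_subtype _ Fin.equivSubtype h]
      rfl
    set ε' : ℕ → ℝ :=
      fun i => if h : i < k then (if α (σ ⟨i, h⟩) < 0 then -1 else 1) else 1 with hε'def
    have hε' : ∀ i, ε' i = 1 ∨ ε' i = -1 := by
      intro i
      simp only [hε'def]
      split_ifs <;> simp
    have hkey := sym e he k a hzero π ε' hε'
    have hL : ∑ i ∈ Finset.range k, (ε' i * a i) • e (π i)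
        = ∑ i : Fin k, α i • e (i : ℕ) := by
      rw [← Fin.sum_univ_eq_sum_range (fun i => (ε' i * a i) • e (π i)) k]
      have h1 : ∀ i : Fin k, (ε' i.1 * a i.1) • e (π i.1) = α (σ i) • e ((σ i : Fin k) : ℕ) := by
        intro i
        rw [hπ i.1 i.2]
        have ha' : a i.1 = |α (σ i)| := dif_pos i.2
        have hε'' : ε' i.1 = if α (σ i) < 0 then -1 else 1 := dif_pos i.2
        rw [ha', hε'']
        congr 1
        split_ifs with h
        · rw [neg_one_mul, abs_of_neg h, neg_neg]
        · rw [one_mul, abs_of_nonneg (not_lt.mp h)]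
      rw [Finset.sum_congr rfl (fun i _ => h1 i)]
      exact Equiv.sum_comp σ (fun j => α j • e (j : ℕ))
    rw [hL] at hkey
    exact hkey
  have hext : ∑ i ∈ Finset.range k, a i • e i = ∑ i ∈ Finset.range (k * m), a i • e i := by
    refine Finset.sum_subset (Finset.range_subset_range.mpr (Nat.le_mul_of_pos_right k hm)) ?_
    intro i _ hik
    rw [hzero i (Nat.not_lt.mp (by simpa using hik)), zero_smul]
  have hblock : ∀ j : ℕ, ‖∑ i ∈ Finset.Ico (j * m) (j * m + m), a i • e i‖
      ≤ a (j * m) * φm := by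
    intro j
    have h1 : ∑ i ∈ Finset.Ico (j * m) (j * m + m), a i • e i
        = ∑ i ∈ Finset.range m, a (j * m + i) • e (j * m + i) := by
      rw [Finset.sum_Ico_eq_sum_range]
      simp only [Nat.add_sub_cancel_left]
    have h2 : ‖∑ i ∈ Finset.range m, a (j * m + i) • e (j * m + i)‖
        = ‖∑ i ∈ Finset.range m, a (j * m + i) • e i‖ := by
      refine shift e he m (j * m) ?_ (fun i => a (j * m + i))
      rcases Nat.eq_zero_or_pos j with h | h
      · left; simp [h]
      · right
        calc m = 1 * m := (one_mul m).symm
          _ ≤ j * m := Nat.mul_le_mul_right m h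
    have h3 : ‖∑ i ∈ Finset.range m, a (j * m + i) • e i‖
        ≤ ‖∑ i ∈ Finset.range m, a (j * m) • e i‖ :=
      dom e he m _ (fun _ => a (j * m)) (fun i => by
        rw [abs_of_nonneg (ha0 _)]
        exact hanti (j * m) (j * m + i) (Nat.le_add_right _ _))
    have h4 : ‖∑ i ∈ Finset.range m, a (j * m) • e i‖ = a (j * m) * φm := by
      rw [← Finset.smul_sum, norm_smul, Real.norm_eq_abs, abs_of_nonneg (ha0 _)]
    rw [h1, h2]
    exact le_trans h3 (le_of_eq h4)
  have hblocks : ‖∑ i ∈ Finset.range (k * m), a i • e i‖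
      ≤ (∑ j ∈ Finset.range k, a (j * m)) * φm := by
    rw [sum_range_mul_eq (fun i => a i • e i) k m, Finset.sum_mul]
    exact le_trans (norm_sum_le _ _) (Finset.sum_le_sum fun j _ => hblock j)
  have hcoef : ∑ j ∈ Finset.range k, a (j * m) ≤ δ + 1 / m := by
    rcases Nat.eq_zero_or_pos k with hk | hk
    · rw [hk]
      simp only [Finset.range_zero, Finset.sum_empty]
      positivity
    · obtain ⟨k', rfl⟩ : ∃ k', k = k' + 1 := ⟨k - 1, by omega⟩
      rw [Finset.sum_range_succ']
      have h0 : a (0 * m) ≤ δ := by rw [Nat.zero_mul]; exact haδ 0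
      have htail : ∑ i ∈ Finset.range k', a ((i + 1) * m) ≤ 1 / m := by
        rw [le_div_iff₀ hmR]
        have hstep : ∀ j ∈ Finset.range k', a ((j + 1) * m) * (m:ℝ)
            ≤ ∑ i ∈ Finset.Ico (j * m) (j * m + m), a i := by
          intro j _
          have hle : ∑ _i ∈ Finset.Ico (j * m) (j * m + m), a ((j + 1) * m)
              ≤ ∑ i ∈ Finset.Ico (j * m) (j * m + m), a i := by
            refine Finset.sum_le_sum fun i hi => ?_
            have hi' := Finset.mem_Ico.mp hi
            refine hanti i ((j + 1) * m) ?_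
            have hjm : (j + 1) * m = j * m + m := by ring
            omega
          calc a ((j + 1) * m) * (m:ℝ)
              = ∑ _i ∈ Finset.Ico (j * m) (j * m + m), a ((j + 1) * m) := by
                rw [Finset.sum_const, Nat.card_Ico, Nat.add_sub_cancel_left,
                  nsmul_eq_mul, mul_comm]
            _ ≤ _ := hle
        have hkey : (∑ i ∈ Finset.range k', a ((i + 1) * m)) * (m:ℝ)
            ≤ ∑ i ∈ Finset.range ((k' + 1) * m), a i := by
          calc (∑ i ∈ Finset.range k', a ((i + 1) * m)) * (m:ℝ)
              = ∑ j ∈ Finset.range k', a ((j + 1) * m) * (m:ℝ) := Finset.sum_mul _ _ _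
            _ ≤ ∑ j ∈ Finset.range k', ∑ i ∈ Finset.Ico (j * m) (j * m + m), a i :=
                Finset.sum_le_sum hstep
            _ ≤ ∑ j ∈ Finset.range (k' + 1), ∑ i ∈ Finset.Ico (j * m) (j * m + m), a i := by
                rw [Finset.sum_range_succ]
                exact le_add_of_nonneg_right (Finset.sum_nonneg fun i _ => ha0 i)
            _ = ∑ i ∈ Finset.range ((k' + 1) * m), a i :=
                (sum_range_mul_eq a (k' + 1) m).symm
        have hone : ∑ i ∈ Finset.range ((k' + 1) * m), a i ≤ 1 := by
          have hEq : ∑ i ∈ Finset.range ((k' + 1) * m), a i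
              = ∑ i ∈ Finset.range (k' + 1), a i := by
            symm
            refine Finset.sum_subset
              (Finset.range_subset_range.mpr (Nat.le_mul_of_pos_right _ hm)) ?_
            intro i _ hik
            exact hzero i (Nat.not_lt.mp (by simpa using hik))
          rw [hEq]
          exact hsum1
        exact le_trans hkey hone
      linarith
  have hδφ : δ * φm = ε / 4 := by
    rw [hδdef]
    field_simp
  have hφmm : φm * (1 / m) < ε / 4 := by
    rw [mul_one_div, div_lt_iff₀ hmR]
    exact hφm
  have hfinal : ‖∑ i : Fin k, α i • e (i : ℕ)‖ ≤ (δ + 1 / m) * φm := by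
    rw [hstart, hext]
    exact le_trans hblocks (mul_le_mul_of_nonneg_right hcoef hφpos.le)
  have hexp : (δ + 1 / m) * φm = δ * φm + φm * (1 / m) := by ring
  calc ‖∑ i : Fin k, α i • e (i : ℕ)‖ ≤ (δ + 1 / m) * φm := hfinal
    _ = δ * φm + φm * (1 / m) := hexp
    _ < ε / 4 + ε / 4 := by rw [hδφ]; linarith
    _ < ε := by linarith


end
end

section
/- Let X be a real Banach space with a normalized 1-symmetric basis (e_n). Let f ∈ L¹(0,1) and let P₀ = {0 = t_0 < t_1 < … < t_n = 1} be a partition of [0,1] such that f is constant on each interval (t_{i−1}, t_i). Then for every partition Q = {I_j}_{j=1}^m of [0,1] into finitely many pairwise disjoint intervals there exists a partition P of [0,1] into intervals whose endpoints all belong to P₀ such that τ(Q,f) ≤ τ(P,f), where for a partition {J_l} into intervals τ({J_l}, f) = ‖Σ_l (∫_{J_l} f dμ) e_l‖_X. -/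
open MeasureTheory

noncomputable section

def cycPerm (k M : ℕ) (hk : k ≤ M) : Equiv.Perm ℕ where
  toFun j := if j < k then j else if j < M then j + 1 else if j = M then k else j
  invFun j := if j < k then j else if j = k then M else if j ≤ M then j - 1 else j
  left_inv j := by by_cases h1 : j < k <;> by_cases h2 : j < M <;> by_cases h3 : j = M <;>
    simp only [h1, h2, h3, if_true, if_false, if_pos, if_neg] <;> split_ifs <;> omega
  right_inv j := by by_cases h1 : j < k <;> by_cases h2 : j = k <;> by_cases h3 : j ≤ M <;>
    simp only [h1, h2, h3, if_true, if_false] <;> split_ifs <;> omega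

lemma perm_norm {X : Type*} [NormedAddCommGroup X] [NormedSpace ℝ X] {e : ℕ → X}
    (he : IsSymmetricBasis e) (a : ℕ →₀ ℝ) (π : Equiv.Perm ℕ) :
    ‖a.sum fun n c => c • e (π n)‖ = ‖a.sum fun n c => c • e n‖ := by
  have := he.2.2 a π (fun _ => 1) (fun _ => Or.inl rfl)
  simpa using this

lemma drop_zero_norm {X : Type*} [NormedAddCommGroup X] [NormedSpace ℝ X] {e : ℕ → X}
    (he : IsSymmetricBasis e) (m : ℕ) (b : ℕ → ℝ) (k : ℕ) (hk : k < m) (hbk : b k = 0) :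
    ‖∑ j ∈ Finset.range (m - 1), b (if j < k then j else j + 1) • e j‖ =
      ‖∑ j ∈ Finset.range m, b j • e j‖ := by
  classical
  set M := m - 1 with hM
  have hkM : k ≤ M := by omega
  set π := cycPerm k M hkM with hπ
  set g : ℕ → ℝ := fun j => if j < M then b (if j < k then j else j + 1) else 0 with hg
  set a : ℕ →₀ ℝ := Finsupp.onFinset (Finset.range M) g
    (by intro j hj; rw [Finset.mem_range]; by_contra hc
        exact hj (if_neg (by omega))) with ha
  have hsupp : a.support ⊆ Finset.range M := Finsupp.support_onFinset_subset
  have hav : ∀ j, a j = g j := fun j => rfl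
  -- sum over finsupp = sum over range M
  have h1 : (a.sum fun n c => c • e n) = ∑ j ∈ Finset.range M, b (if j < k then j else j + 1) • e j := by
    rw [Finsupp.sum_of_support_subset a hsupp _ (by intros; simp)]
    refine Finset.sum_congr rfl fun j hj => ?_
    rw [Finset.mem_range] at hj
    rw [hav, hg]; simp [hj]
  have h2 : (a.sum fun n c => c • e (π n)) =
      ∑ j ∈ Finset.range M, b (if j < k then j else j + 1) • e (if j < k then j else j + 1) := by
    rw [Finsupp.sum_of_support_subset a hsupp _ (by intros; simp)]
    refine Finset.sum_congr rfl fun j hj => ?_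
    rw [Finset.mem_range] at hj
    have hπj : π j = if j < k then j else j + 1 := by
      simp only [hπ, cycPerm, Equiv.coe_fn_mk]
      split_ifs <;> omega
    rw [hav, hg, hπj]; simp [hj]
  -- reindex: the image of j ↦ (if j < k then j else j+1) on range M is (range m).erase k
  have h3 : ∑ j ∈ Finset.range M, b (if j < k then j else j + 1) • e (if j < k then j else j + 1)
      = ∑ j ∈ (Finset.range m).erase k, b j • e j := by
    refine Finset.sum_nbij' (fun j => if j < k then j else j + 1)
      (fun j => if j < k then j else j - 1) ?_ ?_ ?_ ?_ ?_
    · intro j hj; rw [Finset.mem_range] at hj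
      simp only [Finset.mem_erase, Finset.mem_range]; split_ifs <;> omega
    · intro j hj; simp only [Finset.mem_erase, Finset.mem_range] at hj
      rw [Finset.mem_range]; split_ifs <;> omega
    · intro j hj; rw [Finset.mem_range] at hj; split_ifs <;> omega
    · intro j hj; simp only [Finset.mem_erase, Finset.mem_range] at hj
      split_ifs <;> omega
    · intro j hj; rfl
  have h4 : ∑ j ∈ (Finset.range m).erase k, b j • e j = ∑ j ∈ Finset.range m, b j • e j :=
    Finset.sum_erase _ (by rw [hbk, zero_smul])
  calc ‖∑ j ∈ Finset.range (m - 1), b (if j < k then j else j + 1) • e j‖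
      = ‖a.sum fun n c => c • e n‖ := by rw [h1]
    _ = ‖a.sum fun n c => c • e (π n)‖ := by
        rw [perm_norm he a π]
    _ = ‖∑ j ∈ Finset.range m, b j • e j‖ := by rw [h2, h3, h4]
section Integral
variable {f : ℝ → ℝ}

lemma intInt (hf : IntegrableOn f (Set.Ioo (0:ℝ) 1)) (p q : ℝ) (h0 : 0 ≤ p) (hpq : p ≤ q) (h1 : q ≤ 1) :
    IntervalIntegrable f volume p q := by
  rw [intervalIntegrable_iff_integrableOn_Ioo_of_le hpq]
  exact hf.mono_set (Set.Ioo_subset_Ioo h0 h1)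

lemma ioo_eq_intervalIntegral (p q : ℝ) (hpq : p ≤ q) :
    ∫ x in Set.Ioo p q, f x = ∫ x in p..q, f x := by
  rw [intervalIntegral.integral_of_le hpq, integral_Ioc_eq_integral_Ioo]

lemma ioo_add (hf : IntegrableOn f (Set.Ioo (0:ℝ) 1)) (p q r : ℝ) (h0 : 0 ≤ p) (hpq : p ≤ q) (hqr : q ≤ r) (h1 : r ≤ 1) :
    (∫ x in Set.Ioo p r, f x) = (∫ x in Set.Ioo p q, f x) + ∫ x in Set.Ioo q r, f x := by
  rw [ioo_eq_intervalIntegral p q hpq, ioo_eq_intervalIntegral q r hqr,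
    ioo_eq_intervalIntegral p r (hpq.trans hqr),
    ← intervalIntegral.integral_add_adjacent_intervals
      (intInt hf p q h0 hpq (hqr.trans h1)) (intInt hf q r (h0.trans hpq) hqr h1)]

lemma ioo_const (p q : ℝ) (hpq : p ≤ q) (c : ℝ) (hc : ∀ x ∈ Set.Ioo p q, f x = c) :
    (∫ x in Set.Ioo p q, f x) = c * (q - p) := by
  rw [setIntegral_congr_fun measurableSet_Ioo hc, setIntegral_const, smul_eq_mul,
    Real.volume_real_Ioo_of_le hpq]
  ring

end Integral

lemma norm_affine_le_max {X : Type*} [NormedAddCommGroup X] [NormedSpace ℝ X]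
    (g : ℝ → X) (L R : ℝ) (w : X)
    (haff : ∀ x ∈ Set.Icc L R, g x = g L + (x - L) • w)
    (x : ℝ) (hx : x ∈ Set.Icc L R) :
    ‖g x‖ ≤ max ‖g L‖ ‖g R‖ := by
  obtain ⟨hLx, hxR⟩ := hx
  rcases eq_or_lt_of_le (hLx.trans hxR) with hLR | hLR
  · have : x = L := le_antisymm (hLR ▸ hxR) hLx
    rw [this]; exact le_max_left _ _
  · set l : ℝ := (x - L) / (R - L) with hl
    have hRL : (0:ℝ) < R - L := by linarith
    have hl0 : 0 ≤ l := div_nonneg (by linarith) hRL.le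
    have hl1 : l ≤ 1 := by
      rw [hl, div_le_one hRL]; linarith
    have hgR : g R = g L + (R - L) • w := haff R ⟨hLR.le, le_refl R⟩
    have key : g x = (1 - l) • g L + l • g R := by
      rw [haff x ⟨hLx, hxR⟩, hgR, smul_add, smul_smul, ← add_assoc, ← add_smul,
        sub_add_cancel, one_smul]
      congr 1
      rw [hl, div_mul_cancel₀ _ hRL.ne']
    calc ‖g x‖ = ‖(1 - l) • g L + l • g R‖ := by rw [key]
      _ ≤ (1 - l) * ‖g L‖ + l * ‖g R‖ := by
          refine (norm_add_le _ _).trans ?_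
          rw [norm_smul, norm_smul, Real.norm_eq_abs, Real.norm_eq_abs,
            abs_of_nonneg (by linarith), abs_of_nonneg hl0]
      _ ≤ (1 - l) * max ‖g L‖ ‖g R‖ + l * max ‖g L‖ ‖g R‖ := by
          gcongr
          · exact le_max_left _ _
          · exact le_max_right _ _
      _ = max ‖g L‖ ‖g R‖ := by ring
open Classical in
def badSet (n : ℕ) (T : ℕ → ℝ) (m : ℕ) (S : ℕ → ℝ) : Finset ℕ :=
  (Finset.range (m+1)).filter (fun i => ¬ ∃ i' ≤ n, S i = T i')

lemma badSet_mem {n : ℕ} {T : ℕ → ℝ} {m : ℕ} {S : ℕ → ℝ} {i : ℕ} :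
    i ∈ badSet n T m S ↔ i < m + 1 ∧ ¬ ∃ i' ≤ n, S i = T i' := by
  classical
  simp [badSet, Finset.mem_filter, Finset.mem_range]

lemma key {X : Type*} [NormedAddCommGroup X] [NormedSpace ℝ X]
    (e : ℕ → X) (he : IsSymmetricBasis e)
    (f : ℝ → ℝ) (hf : IntegrableOn f (Set.Ioo (0:ℝ) 1))
    (n : ℕ) (T : ℕ → ℝ)
    (hT : ∀ i j, i < j → j ≤ n → T i < T j) (hT0 : T 0 = 0) (hT1 : T n = 1)
    (hconst : ∀ i < n, ∃ c, ∀ x ∈ Set.Ioo (T i) (T (i+1)), f x = c) :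
    ∀ (K m : ℕ) (S : ℕ → ℝ),
      (badSet n T m S).card ≤ K →
      (∀ i j, i < j → j ≤ m → S i < S j) → S 0 = 0 → S m = 1 →
      ∃ (p : ℕ) (U : ℕ → ℝ),
        (∀ i j, i < j → j ≤ p → U i < U j) ∧ U 0 = 0 ∧ U p = 1 ∧
        (∀ i ≤ p, ∃ i' ≤ n, U i = T i') ∧
        ‖∑ j ∈ Finset.range m, (∫ x in Set.Ioo (S j) (S (j+1)), f x) • e j‖ ≤
          ‖∑ j ∈ Finset.range p, (∫ x in Set.Ioo (U j) (U (j+1)), f x) • e j‖ := by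
  intro K
  induction K with
  | zero =>
    intro m S hbad hmono hS0 hS1
    refine ⟨m, S, hmono, hS0, hS1, ?_, le_refl _⟩
    intro i hi
    by_contra hc
    have hmem : i ∈ badSet n T m S := badSet_mem.mpr ⟨by omega, hc⟩
    have := Finset.card_pos.mpr ⟨i, hmem⟩
    omega
  | succ K ih =>
    intro m S hbad hmono hS0 hS1
    by_cases hall : ∀ i ≤ m, ∃ i' ≤ n, S i = T i'
    · exact ⟨m, S, hmono, hS0, hS1, hall, le_refl _⟩
    push_neg at hall
    obtain ⟨a, ham, hbada⟩ := hall
    have ha0 : a ≠ 0 := by rintro rfl; exact hbada 0 (Nat.zero_le n) (by rw [hS0, hT0])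
    have ham' : a ≠ m := by rintro rfl; exact hbada n le_rfl (by rw [hS1, hT1])
    have ha1 : 1 ≤ a := Nat.one_le_iff_ne_zero.mpr ha0
    have ham2 : a ≤ m - 1 := by omega
    have hm2 : 2 ≤ m := by omega
    have hmono' : ∀ p q, p ≤ q → q ≤ m → S p ≤ S q := by
      intro p q hpq hq
      rcases eq_or_lt_of_le hpq with rfl | h
      · exact le_rfl
      · exact (hmono _ _ h hq).le
    have hSnn : ∀ j, j ≤ m → 0 ≤ S j := fun j hj => hS0 ▸ hmono' 0 j (Nat.zero_le j) hj
    have hSle1 : ∀ j, j ≤ m → S j ≤ 1 := fun j hj => hS1 ▸ hmono' j m hj le_rfl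
    set y := S a with hy
    have hy0 : (0:ℝ) < y := by rw [← hS0]; exact hmono 0 a (by omega) (by omega)
    have hy1 : y < 1 := by rw [← hS1]; exact hmono a m (by omega) le_rfl
    -- locate y strictly inside a T-interval
    classical
    set F := (Finset.range (n+1)).filter (fun i' => T i' < y) with hF
    have hF0 : (0:ℕ) ∈ F := Finset.mem_filter.mpr
      ⟨Finset.mem_range.mpr (by omega), by rw [hT0]; exact hy0⟩
    set i := F.max' ⟨0, hF0⟩ with hi
    have hiF : i ∈ F := Finset.max'_mem _ _
    have hin' : i ≤ n := by
      have := (Finset.mem_filter.mp hiF).1; rw [Finset.mem_range] at this; omega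
    have hTiy : T i < y := (Finset.mem_filter.mp hiF).2
    have hin : i < n := by
      rcases eq_or_lt_of_le hin' with h | h
      · exfalso; rw [h, hT1] at hTiy; linarith
      · exact h
    have hTi1y : y < T (i+1) := by
      have h1 : y ≠ T (i+1) := hbada (i+1) (by omega)
      have h2 : ¬ T (i+1) < y := by
        intro h
        have hmem : i + 1 ∈ F := Finset.mem_filter.mpr ⟨Finset.mem_range.mpr (by omega), h⟩
        have := Finset.le_max' F _ hmem
        omega
      exact lt_of_le_of_ne (not_lt.mp h2) h1
    obtain ⟨c, hc⟩ := hconst i hin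
    set L := max (S (a-1)) (T i) with hL
    set R := min (S (a+1)) (T (i+1)) with hR
    have hSa1y : S (a-1) < y := hmono (a-1) a (by omega) (by omega)
    have hySa2 : y < S (a+1) := hmono a (a+1) (by omega) (by omega)
    have hLy : L < y := max_lt hSa1y hTiy
    have hyR : y < R := lt_min hySa2 hTi1y
    have hL0 : (0:ℝ) ≤ L := le_trans (hSnn (a-1) (by omega)) (le_max_left _ _)
    have hR1 : R ≤ 1 := le_trans (min_le_left _ _) (hSle1 (a+1) (by omega))
    have hRS : R ≤ S (a+1) := min_le_left _ _
    have hLS : S (a-1) ≤ L := le_max_left _ _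
    have hLT : T i ≤ L := le_max_right _ _
    have hRT : R ≤ T (i+1) := min_le_right _ _
    set w : X := c • (e (a-1) - e a) with hw
    set G : ℝ → X := fun x => ∑ j ∈ Finset.range m,
      (∫ z in Set.Ioo (Function.update S a x j) (Function.update S a x (j+1)), f z) • e j with hG
    have hGy : ‖∑ j ∈ Finset.range m, (∫ z in Set.Ioo (S j) (S (j+1)), f z) • e j‖ = ‖G y‖ := by
      simp only [hG, hy, Function.update_eq_self]
    have haff : ∀ x ∈ Set.Icc L R, G x = G L + (x - L) • w := by
      intro x hx
      obtain ⟨hLx, hxR⟩ := hx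
      have hLR : L ≤ R := hLx.trans hxR
      have hcLx : ∀ q, L ≤ q → q ≤ R → (∫ z in Set.Ioo L q, f z) = c * (q - L) := by
        intro q h1 h2
        exact ioo_const L q h1 c (fun z hz =>
          hc z ⟨lt_of_le_of_lt hLT hz.1, lt_of_lt_of_le hz.2 (le_trans h2 hRT)⟩)
      have key1 : ∀ q, L ≤ q → q ≤ R →
          (∫ z in Set.Ioo (S (a-1)) q, f z) = (∫ z in Set.Ioo (S (a-1)) L, f z) + c * (q - L) := by
        intro q h1 h2
        rw [ioo_add hf (S (a-1)) L q (hSnn _ (by omega)) hLS h1 (le_trans h2 hR1), hcLx q h1 h2]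
      have key2 : ∀ q, L ≤ q → q ≤ R →
          (∫ z in Set.Ioo q (S (a+1)), f z) = (∫ z in Set.Ioo L (S (a+1)), f z) - c * (q - L) := by
        intro q h1 h2
        have h3 := ioo_add hf L q (S (a+1)) hL0 h1 (le_trans h2 hRS) (hSle1 _ (by omega))
        rw [hcLx q h1 h2] at h3
        linarith
      have hterm : ∀ j ∈ Finset.range m,
          (∫ z in Set.Ioo (Function.update S a x j) (Function.update S a x (j+1)), f z) • e j
          = (∫ z in Set.Ioo (Function.update S a L j) (Function.update S a L (j+1)), f z) • e j
            + (if j = a - 1 then ((x - L) * c) • e (a-1) else 0)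
            - (if j = a then ((x - L) * c) • e a else 0) := by
        intro j hj
        rw [Finset.mem_range] at hj
        by_cases hj1 : j = a - 1
        · subst hj1
          have h1 : a - 1 ≠ a := by omega
          have h2 : a - 1 + 1 = a := by omega
          rw [if_pos rfl, if_neg h1, h2, Function.update_of_ne h1, Function.update_of_ne h1,
            Function.update_self, Function.update_self,
            key1 x hLx hxR, key1 L le_rfl hLR]
          rw [sub_zero, add_smul, add_smul]
          rw [sub_self, mul_zero, zero_smul, add_zero, mul_comm]
        · by_cases hj2 : j = a
          · have h1 : a + 1 ≠ a := by omega
            rw [hj2, if_neg (by omega : ¬ a = a - 1), if_pos rfl,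
              Function.update_self, Function.update_self,
              Function.update_of_ne h1, Function.update_of_ne h1,
              key2 x hLx hxR, key2 L le_rfl hLR]
            rw [add_zero, sub_smul, sub_smul]
            rw [sub_self, mul_zero, zero_smul, sub_zero, mul_comm]
          · have h1 : j ≠ a := hj2
            have h2 : j + 1 ≠ a := by omega
            rw [if_neg hj1, if_neg hj2, Function.update_of_ne h1, Function.update_of_ne h1,
              Function.update_of_ne h2, Function.update_of_ne h2, add_zero, sub_zero]
      simp only [hG]
      rw [Finset.sum_congr rfl hterm, Finset.sum_sub_distrib, Finset.sum_add_distrib,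
        Finset.sum_ite_eq' (Finset.range m) (a-1), Finset.sum_ite_eq' (Finset.range m) a,
        if_pos (Finset.mem_range.mpr (by omega : a - 1 < m)),
        if_pos (Finset.mem_range.mpr (by omega : a < m)), hw]
      module
    have hGconv : ‖G y‖ ≤ max ‖G L‖ ‖G R‖ :=
      norm_affine_le_max G L R w haff y ⟨hLy.le, hyR.le⟩
    -- the two ways to finish
    have Hmove : ∀ x₀ : ℝ, (∃ i' ≤ n, x₀ = T i') → S (a-1) < x₀ → x₀ < S (a+1) →
        ‖G y‖ ≤ ‖G x₀‖ →
        ∃ (p : ℕ) (U : ℕ → ℝ),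
          (∀ i j, i < j → j ≤ p → U i < U j) ∧ U 0 = 0 ∧ U p = 1 ∧
          (∀ i ≤ p, ∃ i' ≤ n, U i = T i') ∧
          ‖∑ j ∈ Finset.range m, (∫ x in Set.Ioo (S j) (S (j+1)), f x) • e j‖ ≤
            ‖∑ j ∈ Finset.range p, (∫ x in Set.Ioo (U j) (U (j+1)), f x) • e j‖ := by
      intro x₀ hgood hlt1 hlt2 hle
      set S' := Function.update S a x₀ with hS'
      have hS'a : S' a = x₀ := Function.update_self _ _ _
      have hS'v : ∀ j, j ≠ a → S' j = S j := fun j h => Function.update_of_ne h _ _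
      have hmS' : ∀ p q, p < q → q ≤ m → S' p < S' q := by
        intro p q hpq hq
        by_cases hp : p = a
        · rw [hp, hS'a, hS'v q (by omega : q ≠ a)]
          exact lt_of_lt_of_le hlt2 (hmono' (a+1) q (by omega) hq)
        · by_cases hq' : q = a
          · rw [hq', hS'a, hS'v p (by omega : p ≠ a)]
            exact lt_of_le_of_lt (hmono' p (a-1) (by omega) (by omega)) hlt1
          · rw [hS'v p hp, hS'v q hq']
            exact hmono p q hpq hq
      have hS'0 : S' 0 = 0 := by rw [hS'v 0 (by omega)]; exact hS0
      have hS'1 : S' m = 1 := by rw [hS'v m (by omega)]; exact hS1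
      have hamem : a ∈ badSet n T m S := badSet_mem.mpr
        ⟨by omega, fun h => by obtain ⟨i', hi', hh⟩ := h; exact hbada i' hi' hh⟩
      have hcard : (badSet n T m S').card ≤ K := by
        have hsub : badSet n T m S' ⊆ (badSet n T m S).erase a := by
          intro i'' hmem
          rw [badSet_mem] at hmem
          obtain ⟨hm1, hm2⟩ := hmem
          have hia : i'' ≠ a := by
            rintro rfl
            exact hm2 (by rw [hS'a]; exact hgood)
          rw [hS'v _ hia] at hm2
          exact Finset.mem_erase.mpr ⟨hia, badSet_mem.mpr ⟨hm1, hm2⟩⟩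
        have h1 := Finset.card_le_card hsub
        have h2 := Finset.card_erase_of_mem hamem
        have h3 := Finset.card_pos.mpr ⟨a, hamem⟩
        omega
      obtain ⟨p, U, h1, h2, h3, h4, h5⟩ := ih m S' hcard hmS' hS'0 hS'1
      refine ⟨p, U, h1, h2, h3, h4, ?_⟩
      have hGx : G x₀ = ∑ j ∈ Finset.range m, (∫ z in Set.Ioo (S' j) (S' (j+1)), f z) • e j := by
        simp only [hG, hS']
      calc ‖∑ j ∈ Finset.range m, (∫ x in Set.Ioo (S j) (S (j+1)), f x) • e j‖
          = ‖G y‖ := hGy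
        _ ≤ ‖G x₀‖ := hle
        _ = ‖∑ j ∈ Finset.range m, (∫ z in Set.Ioo (S' j) (S' (j+1)), f z) • e j‖ := by rw [hGx]
        _ ≤ _ := h5
    have Hmerge : ∀ (x₀ : ℝ) (k : ℕ),
        ((x₀ = S (a-1) ∧ k = a - 1) ∨ (x₀ = S (a+1) ∧ k = a)) → ‖G y‖ ≤ ‖G x₀‖ →
        ∃ (p : ℕ) (U : ℕ → ℝ),
          (∀ i j, i < j → j ≤ p → U i < U j) ∧ U 0 = 0 ∧ U p = 1 ∧
          (∀ i ≤ p, ∃ i' ≤ n, U i = T i') ∧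
          ‖∑ j ∈ Finset.range m, (∫ x in Set.Ioo (S j) (S (j+1)), f x) • e j‖ ≤
            ‖∑ j ∈ Finset.range p, (∫ x in Set.Ioo (U j) (U (j+1)), f x) • e j‖ := by
      intro x₀ k hcase hle
      set S'' : ℕ → ℝ := fun j => S (if j < a then j else j + 1) with hS''
      set b : ℕ → ℝ := fun j => if j < m then
        (∫ z in Set.Ioo (Function.update S a x₀ j) (Function.update S a x₀ (j+1)), f z) else 0 with hb
      have hGx : G x₀ = ∑ j ∈ Finset.range m, b j • e j := by
        simp only [hG]
        refine Finset.sum_congr rfl fun j hj => ?_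
        rw [Finset.mem_range] at hj
        simp only [hb]
        rw [if_pos hj]
      have hkm : k < m := by rcases hcase with ⟨_, hk⟩ | ⟨_, hk⟩ <;> omega
      have hbk : b k = 0 := by
        rcases hcase with ⟨hx, hk⟩ | ⟨hx, hk⟩
        · rw [hk]
          simp only [hb]
          rw [if_pos (by omega : a - 1 < m), (by omega : a - 1 + 1 = a),
            Function.update_of_ne (by omega : a - 1 ≠ a), Function.update_self, hx, Set.Ioo_self]
          simp
        · rw [hk]
          simp only [hb]
          rw [if_pos (by omega : a < m), Function.update_self,
            Function.update_of_ne (by omega : a + 1 ≠ a), hx, Set.Ioo_self]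
          simp
      have hmatch : ∀ j ∈ Finset.range (m-1),
          b (if j < k then j else j + 1) • e j = (∫ z in Set.Ioo (S'' j) (S'' (j+1)), f z) • e j := by
        intro j hj
        rw [Finset.mem_range] at hj
        congr 1
        rcases hcase with ⟨hx, hk⟩ | ⟨hx, hk⟩
        · rw [hk]
          by_cases h1 : j < a - 1
          · rw [if_pos h1]
            simp only [hb, hS'']
            rw [if_pos (by omega : j < m), Function.update_of_ne (by omega : j ≠ a),
              Function.update_of_ne (by omega : j + 1 ≠ a),
              if_pos (by omega : j < a), if_pos (by omega : j + 1 < a)]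
          · rw [if_neg h1]
            by_cases h2 : j = a - 1
            · rw [h2]
              simp only [hb, hS'']
              rw [(by omega : a - 1 + 1 = a), if_pos (by omega : a < m),
                Function.update_self, Function.update_of_ne (by omega : a + 1 ≠ a),
                if_pos (by omega : a - 1 < a), if_neg (by omega : ¬ a < a), hx]
            · simp only [hb, hS'']
              rw [if_pos (by omega : j + 1 < m),
                Function.update_of_ne (by omega : j + 1 ≠ a),
                Function.update_of_ne (by omega : j + 1 + 1 ≠ a),
                if_neg (by omega : ¬ j < a), if_neg (by omega : ¬ j + 1 < a)]
        · rw [hk]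
          by_cases h1 : j < a
          · rw [if_pos h1]
            simp only [hb, hS'']
            by_cases h2 : j + 1 = a
            · rw [if_pos (by omega : j < m), Function.update_of_ne (by omega : j ≠ a),
                if_pos h1, if_neg (by omega : ¬ j + 1 < a), h2, Function.update_self, hx]
            · rw [if_pos (by omega : j < m), Function.update_of_ne (by omega : j ≠ a),
                Function.update_of_ne h2, if_pos h1, if_pos (by omega : j + 1 < a)]
          · rw [if_neg h1]
            simp only [hb, hS'']
            rw [if_pos (by omega : j + 1 < m),
              Function.update_of_ne (by omega : j + 1 ≠ a),
              Function.update_of_ne (by omega : j + 1 + 1 ≠ a),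
              if_neg (by omega : ¬ j < a), if_neg (by omega : ¬ j + 1 < a)]
      have hdrop := drop_zero_norm he m b k hkm hbk
      have hmS'' : ∀ p q, p < q → q ≤ m - 1 → S'' p < S'' q := by
        intro p q hpq hq
        simp only [hS'']
        refine hmono _ _ ?_ ?_ <;> split_ifs <;> omega
      have hS''0 : S'' 0 = 0 := by
        simp only [hS'']
        rw [if_pos (by omega : 0 < a)]
        exact hS0
      have hS''1 : S'' (m-1) = 1 := by
        simp only [hS'']
        rw [if_neg (by omega : ¬ m - 1 < a), (by omega : m - 1 + 1 = m)]
        exact hS1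
      have hamem : a ∈ badSet n T m S := badSet_mem.mpr
        ⟨by omega, fun h => by obtain ⟨i', hi', hh⟩ := h; exact hbada i' hi' hh⟩
      have hcard : (badSet n T (m-1) S'').card ≤ K := by
        have hmaps : ∀ j ∈ badSet n T (m-1) S'',
            (if j < a then j else j + 1) ∈ (badSet n T m S).erase a := by
          intro j hmem
          rw [badSet_mem] at hmem
          refine Finset.mem_erase.mpr ⟨by split_ifs <;> omega, badSet_mem.mpr ⟨by split_ifs <;> omega, ?_⟩⟩
          exact hmem.2
        have hinj : Set.InjOn (fun j => if j < a then j else j + 1) (badSet n T (m-1) S'') := by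
          intro j1 _ j2 _ hj
          simp only at hj
          split_ifs at hj <;> omega
        have h1 := Finset.card_le_card_of_injOn _ hmaps hinj
        have h2 := Finset.card_erase_of_mem hamem
        have h3 := Finset.card_pos.mpr ⟨a, hamem⟩
        omega
      obtain ⟨p, U, h1, h2, h3, h4, h5⟩ := ih (m-1) S'' hcard hmS'' hS''0 hS''1
      refine ⟨p, U, h1, h2, h3, h4, ?_⟩
      calc ‖∑ j ∈ Finset.range m, (∫ x in Set.Ioo (S j) (S (j+1)), f x) • e j‖
          = ‖G y‖ := hGy
        _ ≤ ‖G x₀‖ := hle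
        _ = ‖∑ j ∈ Finset.range m, b j • e j‖ := by rw [hGx]
        _ = ‖∑ j ∈ Finset.range (m-1), b (if j < k then j else j + 1) • e j‖ := hdrop.symm
        _ = ‖∑ j ∈ Finset.range (m-1), (∫ z in Set.Ioo (S'' j) (S'' (j+1)), f z) • e j‖ := by
            rw [Finset.sum_congr rfl hmatch]
        _ ≤ _ := h5
    -- dispatch on which endpoint attains the max
    rcases le_total ‖G R‖ ‖G L‖ with hmax | hmax
    · have hle : ‖G y‖ ≤ ‖G L‖ := by rw [max_eq_left hmax] at hGconv; exact hGconv
      by_cases hcross : T i ≤ S (a - 1)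
      · exact Hmerge L (a-1) (Or.inl ⟨max_eq_left hcross, rfl⟩) hle
      · push_neg at hcross
        have hLeq : L = T i := max_eq_right hcross.le
        exact Hmove L ⟨i, hin', hLeq⟩ (by rw [hL] at hLeq ⊢; rw [hLeq]; exact hcross)
          (lt_trans hLy hySa2) hle
    · have hle : ‖G y‖ ≤ ‖G R‖ := by rw [max_eq_right hmax] at hGconv; exact hGconv
      by_cases hcross : S (a+1) ≤ T (i+1)
      · exact Hmerge R a (Or.inr ⟨min_eq_left hcross, rfl⟩) hle
      · push_neg at hcross
        have hReq : R = T (i+1) := min_eq_right hcross.le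
        exact Hmove R ⟨i+1, by omega, hReq⟩ (lt_trans hSa1y hyR)
          (by rw [hReq]; exact hcross) hle
/-- Let `f ∈ L¹(0,1)` be constant on each interval of a partition
`P₀ = {0 = t_0 < … < t_n = 1}`.  Then for every partition `Q = {0 = s_0 < … < s_m = 1}`
of `[0,1]` into intervals there is a partition `P = {0 = u_0 < … < u_p = 1}` whose points
all belong to `P₀` with `τ(Q,f) ≤ τ(P,f)`, where
`τ({I_l},f) = ‖Σ_l (∫_{I_l} f dμ) e_l‖_X`. -/
theorem exists_coarser_partition_increasing_tau
    {X : Type*} [NormedAddCommGroup X] [NormedSpace ℝ X]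
    (e : ℕ → X) (he : IsSymmetricBasis e)
    (f : ℝ → ℝ) (hf : IntegrableOn f (Set.Ioo (0 : ℝ) 1))
    (n : ℕ) (t : Fin (n + 1) → ℝ)
    (ht : StrictMono t) (ht0 : t 0 = 0) (ht1 : t (Fin.last n) = 1)
    (hconst : ∀ i : Fin n, ∃ c : ℝ, ∀ x ∈ Set.Ioo (t i.castSucc) (t i.succ), f x = c) :
    ∀ (m : ℕ) (s : Fin (m + 1) → ℝ),
      StrictMono s → s 0 = 0 → s (Fin.last m) = 1 →
      ∃ (p : ℕ) (u : Fin (p + 1) → ℝ),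
        StrictMono u ∧ u 0 = 0 ∧ u (Fin.last p) = 1 ∧
        (∀ i, u i ∈ Set.range t) ∧
        ‖∑ j : Fin m, (∫ x in Set.Ioo (s j.castSucc) (s j.succ), f x) • e (j : ℕ)‖ ≤
          ‖∑ j : Fin p, (∫ x in Set.Ioo (u j.castSucc) (u j.succ), f x) • e (j : ℕ)‖ := by
  intro m s hs hs0 hs1
  set T : ℕ → ℝ := fun i => t ⟨min i n, by omega⟩ with hTdef
  set S : ℕ → ℝ := fun i => s ⟨min i m, by omega⟩ with hSdef
  have hT : ∀ i j, i < j → j ≤ n → T i < T j := by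
    intro i j hij hj
    apply ht
    rw [Fin.mk_lt_mk]
    omega
  have hT0 : T 0 = 0 := by
    rw [hTdef]
    show t _ = 0
    rw [← ht0]
    congr 1
  have hT1 : T n = 1 := by
    rw [hTdef]
    show t _ = 1
    rw [← ht1]
    congr 1
    apply Fin.ext
    simp [Fin.last]
  have hconst' : ∀ i < n, ∃ c, ∀ x ∈ Set.Ioo (T i) (T (i+1)), f x = c := by
    intro i hi
    obtain ⟨c, hc⟩ := hconst ⟨i, hi⟩
    refine ⟨c, fun x hx => hc x ?_⟩
    have e1 : T i = t ((⟨i, hi⟩ : Fin n).castSucc) := by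
      rw [hTdef]
      show t _ = t _
      congr 1
      apply Fin.ext
      simp [Fin.coe_castSucc]
      omega
    have e2 : T (i+1) = t ((⟨i, hi⟩ : Fin n).succ) := by
      rw [hTdef]
      show t _ = t _
      congr 1
      apply Fin.ext
      simp [Fin.val_succ]
      omega
    rwa [e1, e2] at hx
  have hmS : ∀ i j, i < j → j ≤ m → S i < S j := by
    intro i j hij hj
    apply hs
    rw [Fin.mk_lt_mk]
    omega
  have hS0 : S 0 = 0 := by
    rw [hSdef]
    show s _ = 0
    rw [← hs0]
    congr 1
  have hS1 : S m = 1 := by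
    rw [hSdef]
    show s _ = 1
    rw [← hs1]
    congr 1
    apply Fin.ext
    simp [Fin.last]
  obtain ⟨p, U, hU, hU0, hU1, hUrange, hle⟩ :=
    key e he f hf n T hT hT0 hT1 hconst' (badSet n T m S).card m S le_rfl hmS hS0 hS1
  refine ⟨p, fun i => U i.val, ?_, ?_, ?_, ?_, ?_⟩
  · intro i j hij
    exact hU i.val j.val hij (Nat.lt_succ_iff.mp j.isLt)
  · exact hU0
  · exact hU1
  · intro i
    obtain ⟨i', hi'n, hEq⟩ := hUrange i.val (Nat.lt_succ_iff.mp i.isLt)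
    refine ⟨⟨i', by omega⟩, ?_⟩
    show t _ = U i.val
    rw [hEq, hTdef]
    show t _ = t _
    congr 1
    apply Fin.ext
    simp
    omega
  · have lhs_eq : ∑ j : Fin m, (∫ x in Set.Ioo (s j.castSucc) (s j.succ), f x) • e (j : ℕ)
        = ∑ j ∈ Finset.range m, (∫ x in Set.Ioo (S j) (S (j+1)), f x) • e j := by
      rw [← Fin.sum_univ_eq_sum_range (fun j => (∫ x in Set.Ioo (S j) (S (j+1)), f x) • e j) m]
      refine Finset.sum_congr rfl fun j _ => ?_
      have hjlt := j.isLt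
      have h1 : S j.val = s j.castSucc := by
        rw [hSdef]
        show s _ = s _
        congr 1
        apply Fin.ext
        simp only [Fin.coe_castSucc]
        omega
      have h2 : S (j.val + 1) = s j.succ := by
        rw [hSdef]
        show s _ = s _
        congr 1
        apply Fin.ext
        simp only [Fin.val_succ]
        omega
      rw [h1, h2]
    have rhs_eq : ∑ j : Fin p, (∫ x in Set.Ioo ((fun i : Fin (p+1) => U i.val) j.castSucc)
          ((fun i : Fin (p+1) => U i.val) j.succ), f x) • e (j : ℕ)
        = ∑ j ∈ Finset.range p, (∫ x in Set.Ioo (U j) (U (j+1)), f x) • e j := by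
      rw [← Fin.sum_univ_eq_sum_range (fun j => (∫ x in Set.Ioo (U j) (U (j+1)), f x) • e j) p]
      refine Finset.sum_congr rfl fun j _ => ?_
      simp [Fin.coe_castSucc, Fin.val_succ]
    rw [lhs_eq, rhs_eq]
    exact hle

end
end

section
/- Let X be a real Banach space with a normalized 1-symmetric basis (e_n), and let (h_n) be the Haar system in L¹(0,1). Then for every n ≥ 1 and all scalars a_1,…,a_{n+1}, ‖Σ_{i=1}^n a_i h_i‖_{JF_X} ≤ ‖Σ_{i=1}^{n+1} a_i h_i‖_{JF_X}. Consequently the Haar system is a monotone Schauder basis of JF_X. -/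
open MeasureTheory

noncomputable section

/-- The `JF_X` norm of an integrable function on `(0,1)`: the supremum of
`‖Σ_j (∫_{I_j} f dμ) e_j‖_X` over all finite families of pairwise disjoint open
subintervals of `(0,1)`. -/
def JFNorm1 {X : Type*} [NormedAddCommGroup X] [NormedSpace ℝ X]
    (e : ℕ → X) (f : ℝ → ℝ) : ℝ :=
  sSup { r | ∃ (m : ℕ) (a b : Fin m → ℝ),
    (∀ j, 0 ≤ a j ∧ a j < b j ∧ b j ≤ 1) ∧
    (Pairwise fun i j => Disjoint (Set.Ioo (a i) (b i)) (Set.Ioo (a j) (b j))) ∧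
    r = ‖∑ j : Fin m, (∫ x in Set.Ioo (a j) (b j), f x) • e (j : ℕ)‖ }

/-- The Haar system: `haar 1 = χ_{[0,1]}` and, for `n = 2^k + i` with `1 ≤ i ≤ 2^k`,
`haar n = χ_{[(2i-2)/2^{k+1},(2i-1)/2^{k+1}]} - χ_{((2i-1)/2^{k+1},2i/2^{k+1}]}`. -/
def haar (n : ℕ) : ℝ → ℝ :=
  if n = 0 then 0
  else if n = 1 then Set.indicator (Set.Icc (0 : ℝ) 1) (fun _ => (1 : ℝ))
  else
    let k := Nat.log2 (n - 1)
    let i := n - 2 ^ k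
    fun x =>
      Set.indicator (Set.Icc ((2 * (i : ℝ) - 2) / 2 ^ (k + 1)) ((2 * (i : ℝ) - 1) / 2 ^ (k + 1)))
          (fun _ => (1 : ℝ)) x -
        Set.indicator (Set.Ioc ((2 * (i : ℝ) - 1) / 2 ^ (k + 1)) ((2 * (i : ℝ)) / 2 ^ (k + 1)))
          (fun _ => (1 : ℝ)) x

section Basis
variable {X : Type*} [NormedAddCommGroup X] [NormedSpace ℝ X] {e : ℕ → X}

lemma finsupp_sum_eq (s : Finset ℕ) (v : ℕ → ℝ) (g : ℕ → ℝ → X) (hg : ∀ n, g n 0 = 0) :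
    (Finsupp.onFinset s (fun n => if n ∈ s then v n else 0) (by
      intro n h; by_contra hn; simp [hn] at h)).sum g = ∑ n ∈ s, g n (v n) := by
  classical
  rw [Finsupp.sum]
  rw [Finset.sum_subset (Finsupp.support_onFinset_subset)]
  · apply Finset.sum_congr rfl
    intro n hn
    simp [Finsupp.onFinset, hn]
  · intro n hn hns
    have : (Finsupp.onFinset s (fun n => if n ∈ s then v n else 0) (by
      intro n h; by_contra hn'; simp [hn'] at h)) n = 0 := by
      simpa using Finsupp.notMem_support_iff.mp hns
    rw [this, hg]

lemma signflip (he : IsSymmetricBasis e) (s : Finset ℕ) (v ε : ℕ → ℝ)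
    (hε : ∀ n, ε n = 1 ∨ ε n = -1) :
    ‖∑ n ∈ s, (ε n * v n) • e n‖ = ‖∑ n ∈ s, v n • e n‖ := by
  classical
  have h := he.2.2 (Finsupp.onFinset s (fun n => if n ∈ s then v n else 0) (by
      intro n h; by_contra hn; simp [hn] at h)) 1 ε hε
  rw [finsupp_sum_eq s v (fun n c => c • e n) (by intro n; simp)] at h
  rw [finsupp_sum_eq s v (fun n c => (ε n * c) • e ((1 : Equiv.Perm ℕ) n)) (by intro n; simp)] at h
  simpa using h

lemma uncond_step (he : IsSymmetricBasis e) (T : Finset ℕ) (j : ℕ) (hj : j ∈ T)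
    (v : ℕ → ℝ) (x : ℝ) (hvx : |v j| ≤ |x|) :
    ‖∑ n ∈ T, v n • e n‖ ≤ ‖∑ n ∈ T, (Function.update v j x) n • e n‖ := by
  classical
  obtain ⟨t, ht1, ht2⟩ : ∃ t : ℝ, |t| ≤ 1 ∧ v j = t * x := by
    rcases eq_or_ne x 0 with hx | hx
    · refine ⟨0, by norm_num, ?_⟩
      have : |v j| ≤ 0 := by simpa [hx] using hvx
      have := abs_nonneg (v j)
      nlinarith [abs_nonneg (v j), (abs_eq_zero (a := v j)).mp (le_antisymm ‹|v j| ≤ 0› this)]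
    · refine ⟨v j / x, ?_, by field_simp⟩
      rw [abs_div, div_le_one (by positivity)]
      exact hvx
  set θ : ℝ := (1 + t) / 2 with hθ
  have hθ0 : 0 ≤ θ := by rw [hθ]; cases abs_le.mp ht1; linarith
  have hθ1 : θ ≤ 1 := by rw [hθ]; cases abs_le.mp ht1; linarith
  set R : X := ∑ n ∈ T.erase j, v n • e n with hR
  have hsum1 : ∑ n ∈ T, v n • e n = (t * x) • e j + R := by
    rw [hR, ← Finset.add_sum_erase _ _ hj, ht2]
  have hsum2 : ∑ n ∈ T, (Function.update v j x) n • e n = x • e j + R := by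
    rw [hR, ← Finset.add_sum_erase _ (fun n => (Function.update v j x) n • e n) hj]
    congr 1
    · simp
    · apply Finset.sum_congr rfl
      intro n hn
      rw [Function.update_of_ne (Finset.ne_of_mem_erase hn)]
  have hsum3 : ∑ n ∈ T, ((fun n => if n = j then (-1 : ℝ) else 1) n *
      (Function.update v j x) n) • e n = (-x) • e j + R := by
    rw [hR, ← Finset.add_sum_erase _ _ hj]
    congr 1
    · simp
    · apply Finset.sum_congr rfl
      intro n hn
      have hnj := Finset.ne_of_mem_erase hn
      simp [Function.update_of_ne hnj, hnj]
  have hnegnorm : ‖(-x) • e j + R‖ = ‖x • e j + R‖ := by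
    rw [← hsum2, ← hsum3]
    exact signflip he T (Function.update v j x) _ (by
      intro n; by_cases h : n = j <;> simp [h])
  have hconv : (t * x) • e j + R = θ • (x • e j + R) + (1 - θ) • ((-x) • e j + R) := by
    have : t = 2 * θ - 1 := by rw [hθ]; ring
    rw [this]
    module
  calc ‖∑ n ∈ T, v n • e n‖ = ‖θ • (x • e j + R) + (1 - θ) • ((-x) • e j + R)‖ := by
        rw [hsum1, hconv]
    _ ≤ θ * ‖x • e j + R‖ + (1 - θ) * ‖(-x) • e j + R‖ := by
        refine (norm_add_le _ _).trans ?_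
        rw [norm_smul, norm_smul, Real.norm_of_nonneg hθ0, Real.norm_of_nonneg (by linarith)]
    _ = ‖x • e j + R‖ := by rw [hnegnorm]; ring
    _ = ‖∑ n ∈ T, (Function.update v j x) n • e n‖ := by rw [hsum2]

lemma uncond_aux (he : IsSymmetricBasis e) (s : Finset ℕ) :
    ∀ v w : ℕ → ℝ, (∀ n, n ∉ s → v n = w n) → (∀ n ∈ s, |v n| ≤ |w n|) →
    ∀ T : Finset ℕ, s ⊆ T → ‖∑ n ∈ T, v n • e n‖ ≤ ‖∑ n ∈ T, w n • e n‖ := by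
  classical
  induction s using Finset.induction with
  | empty =>
    intro v w hvw _ T _
    have : ∀ n, v n = w n := fun n => hvw n (by simp)
    simp [funext this]
  | insert j s' hj ih =>
    intro v w hvw habs T hsT
    have hjT : j ∈ T := hsT (Finset.mem_insert_self _ _)
    have h1 : ‖∑ n ∈ T, v n • e n‖ ≤ ‖∑ n ∈ T, (Function.update v j (w j)) n • e n‖ :=
      uncond_step he T j hjT v (w j) (habs j (Finset.mem_insert_self _ _))
    refine h1.trans (ih (Function.update v j (w j)) w ?_ ?_ T ?_)
    · intro m hm
      by_cases h : m = j
      · subst h; simp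
      · rw [Function.update_of_ne h]
        exact hvw m (by simp [hm, h])
    · intro m hm
      rw [Function.update_of_ne (by rintro rfl; exact hj hm)]
      exact habs m (Finset.mem_insert_of_mem hm)
    · exact (Finset.subset_insert _ _).trans hsT

lemma uncond (he : IsSymmetricBasis e) (T : Finset ℕ) (v w : ℕ → ℝ)
    (h : ∀ n ∈ T, |v n| ≤ |w n|) :
    ‖∑ n ∈ T, v n • e n‖ ≤ ‖∑ n ∈ T, w n • e n‖ := by
  classical
  exact uncond_aux he T (T.piecewise v w) w
    (fun n hn => Finset.piecewise_eq_of_notMem _ _ _ hn)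
    (fun n hn => by rw [Finset.piecewise_eq_of_mem _ _ _ hn]; exact h n hn) T subset_rfl
    |>.trans_eq' (by
      apply congrArg
      apply Finset.sum_congr rfl
      intro n hn
      rw [Finset.piecewise_eq_of_mem _ _ _ hn])

end Basis

section Haar

def kk (n : ℕ) : ℕ := Nat.log2 n
def ii (n : ℕ) : ℕ := n + 1 - 2 ^ kk n
def al (n : ℕ) : ℝ := (2 * (ii n : ℝ) - 2) / 2 ^ (kk n + 1)
def be (n : ℕ) : ℝ := (2 * (ii n : ℝ) - 1) / 2 ^ (kk n + 1)
def ga (n : ℕ) : ℝ := (2 * (ii n : ℝ)) / 2 ^ (kk n + 1)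

variable {n : ℕ}

lemma pow_kk_le (hn : 1 ≤ n) : 2 ^ kk n ≤ n := by
  rw [kk, Nat.log2_eq_log_two]
  exact Nat.pow_log_le_self 2 (by omega)

lemma lt_pow_kk : n < 2 ^ (kk n + 1) := by
  rw [kk, Nat.log2_eq_log_two]
  exact Nat.lt_pow_succ_log_self (by norm_num) n

lemma ii_ge1 (hn : 1 ≤ n) : 1 ≤ ii n := by
  have := pow_kk_le hn; rw [ii]; omega

lemma ii_le : ii n ≤ 2 ^ kk n := by
  have := lt_pow_kk (n := n); rw [ii]; rw [pow_succ] at this; omega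

lemma al_nonneg (hn : 1 ≤ n) : 0 ≤ al n := by
  have h1 : (1 : ℝ) ≤ (ii n : ℝ) := by exact_mod_cast ii_ge1 hn
  rw [al]
  apply div_nonneg (by linarith) (by positivity)

lemma al_lt_be : al n < be n := by
  rw [al, be, div_lt_div_iff_of_pos_right (by positivity)]
  linarith

lemma be_lt_ga : be n < ga n := by
  rw [be, ga, div_lt_div_iff_of_pos_right (by positivity)]
  linarith

lemma al_lt_ga : al n < ga n := al_lt_be.trans be_lt_ga

lemma ga_le_one : ga n ≤ 1 := by
  have h : (ii n : ℝ) ≤ 2 ^ kk n := by exact_mod_cast ii_le (n := n)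
  rw [ga, div_le_one (by positivity), pow_succ]
  nlinarith [pow_pos (show (0:ℝ) < 2 by norm_num) (kk n)]

lemma mid_eq : be n - al n = ga n - be n := by
  rw [al, be, ga]; ring

lemma haar_succ_apply (hn : 1 ≤ n) (x : ℝ) :
    haar (n + 1) x =
      Set.indicator (Set.Icc (al n) (be n)) (fun _ => (1 : ℝ)) x -
        Set.indicator (Set.Ioc (be n) (ga n)) (fun _ => (1 : ℝ)) x := by
  have h0 : n + 1 ≠ 0 := by omega
  have h1 : n + 1 ≠ 1 := by omega
  simp only [haar, if_neg h0, if_neg h1, Nat.add_sub_cancel]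
  rfl

lemma haar_succ_zero_outside (hn : 1 ≤ n) {x : ℝ} (hx : x < al n ∨ ga n < x) :
    haar (n + 1) x = 0 := by
  have hab := al_lt_be (n := n); have hbg := be_lt_ga (n := n)
  rw [haar_succ_apply hn]
  simp only [Set.indicator_apply, Set.mem_Icc, Set.mem_Ioc]
  rcases hx with hx | hx
  · rw [if_neg (by push_neg; intro h; linarith), if_neg (by push_neg; intro h; linarith)]
    ring
  · rw [if_neg (by push_neg; intro h; linarith), if_neg (by push_neg; intro h; linarith)]
    ring

lemma haar_succ_one (hn : 1 ≤ n) {x : ℝ} (h1 : al n < x) (h2 : x < be n) :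
    haar (n + 1) x = 1 := by
  have hbg := be_lt_ga (n := n)
  rw [haar_succ_apply hn]
  simp only [Set.indicator_apply, Set.mem_Icc, Set.mem_Ioc]
  rw [if_pos ⟨le_of_lt h1, le_of_lt h2⟩, if_neg (by push_neg; intro h; linarith)]
  ring

lemma haar_succ_negone (hn : 1 ≤ n) {x : ℝ} (h1 : be n < x) (h2 : x < ga n) :
    haar (n + 1) x = -1 := by
  rw [haar_succ_apply hn]
  simp only [Set.indicator_apply, Set.mem_Icc, Set.mem_Ioc]
  rw [if_neg (by push_neg; intro h; linarith), if_pos ⟨h1, le_of_lt h2⟩]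
  ring

lemma haar_integrable (m : ℕ) : Integrable (haar m) (volume : Measure ℝ) := by
  have hind : ∀ u v : ℝ, Integrable (Set.indicator (Set.Icc u v) (fun _ => (1 : ℝ)))
      (volume : Measure ℝ) := by
    intro u v
    rw [integrable_indicator_iff measurableSet_Icc, integrableOn_const_iff]
    right; exact measure_Icc_lt_top
  have hind2 : ∀ u v : ℝ, Integrable (Set.indicator (Set.Ioc u v) (fun _ => (1 : ℝ)))
      (volume : Measure ℝ) := by
    intro u v
    rw [integrable_indicator_iff measurableSet_Ioc, integrableOn_const_iff]
    right; exact measure_Ioc_lt_top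
  rcases Nat.eq_zero_or_pos m with rfl | hm
  · have : haar 0 = 0 := by rw [haar]; simp
    rw [this]
    exact integrable_zero _ _ _
  rcases Nat.eq_or_lt_of_le hm with h1 | h2
  · have : haar m = Set.indicator (Set.Icc (0 : ℝ) 1) (fun _ => (1 : ℝ)) := by
      rw [haar, if_neg (by omega), if_pos (by omega)]
    rw [this]; exact hind 0 1
  · have h0 : m ≠ 0 := by omega
    have h1' : m ≠ 1 := by omega
    have : haar m = fun x =>
        (Set.Icc ((2 * ((m - 2 ^ Nat.log2 (m-1) : ℕ) : ℝ) - 2) / 2 ^ (Nat.log2 (m-1) + 1))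
          ((2 * ((m - 2 ^ Nat.log2 (m-1) : ℕ) : ℝ) - 1) / 2 ^ (Nat.log2 (m-1) + 1))).indicator
          (fun _ => (1 : ℝ)) x -
        (Set.Ioc ((2 * ((m - 2 ^ Nat.log2 (m-1) : ℕ) : ℝ) - 1) / 2 ^ (Nat.log2 (m-1) + 1))
          ((2 * ((m - 2 ^ Nat.log2 (m-1) : ℕ) : ℝ)) / 2 ^ (Nat.log2 (m-1) + 1))).indicator (fun _ => (1 : ℝ)) x := by
      rw [haar, if_neg h0, if_neg h1']
    rw [this]
    exact (hind _ _).sub (hind2 _ _)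

/-- The constancy of `haar m`, `1 ≤ m ≤ n`, on `(al n, ga n)`. -/
lemma haar_const_on (hn : 1 ≤ n) {m : ℕ} (hm : 1 ≤ m) (hmn : m ≤ n) :
    ∃ c : ℝ, ∀ x ∈ Set.Ioo (al n) (ga n), haar m x = c := by
  rcases Nat.eq_or_lt_of_le hm with h1 | h2
  · refine ⟨1, fun x hx => ?_⟩
    rw [haar, if_neg (by omega), if_pos (by omega)]
    have h0 : 0 ≤ al n := al_nonneg hn
    have hga : ga n ≤ 1 := ga_le_one
    exact Set.indicator_of_mem (Set.mem_Icc.mpr ⟨by linarith [hx.1], by linarith [hx.2]⟩) _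
  -- m ≥ 2
  have hm0 : m ≠ 0 := by omega
  have hm1 : m ≠ 1 := by omega
  set l : ℕ := Nat.log2 (m - 1) with hl
  set r : ℕ := m - 2 ^ l with hr
  set A : ℝ := (2 * (r : ℝ) - 2) / 2 ^ (l + 1) with hA_def
  set B : ℝ := (2 * (r : ℝ) - 1) / 2 ^ (l + 1) with hB_def
  set C : ℝ := (2 * (r : ℝ)) / 2 ^ (l + 1) with hC_def
  have hform : ∀ x, haar m x = (Set.Icc A B).indicator (fun _ => (1:ℝ)) x -
      (Set.Ioc B C).indicator (fun _ => (1:ℝ)) x := by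
    intro x
    rw [haar, if_neg hm0, if_neg hm1]
  have hml : 2 ^ l ≤ m - 1 := by
    rw [hl, Nat.log2_eq_log_two]
    exact Nat.pow_log_le_self 2 (by omega)
  have hml2 : m - 1 < 2 ^ (l + 1) := by
    rw [hl, Nat.log2_eq_log_two]
    exact Nat.lt_pow_succ_log_self (by norm_num) _
  have hmeq : m = 2 ^ l + r := by omega
  have hr1 : 1 ≤ r := by omega
  have hlk : l ≤ kk n := by
    rw [hl, kk, Nat.log2_eq_log_two, Nat.log2_eq_log_two]
    exact Nat.log_mono_right (by omega)
  have hnii : n + 1 = 2 ^ kk n + ii n := by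
    have := pow_kk_le hn; rw [ii]; omega
  have hexcl : ∀ j : ℕ, j ≤ 2 * r → ¬ ((j : ℝ) / 2 ^ (l + 1) ∈ Set.Ioo (al n) (ga n)) := by
    intro j hj hmem
    obtain ⟨hmem1, hmem2⟩ := hmem
    have hpow : (2 : ℝ) ^ (kk n + 1) = 2 ^ (l + 1) * 2 ^ (kk n - l) := by
      rw [← pow_add]; congr 1; omega
    have hii1 : 1 ≤ ii n := ii_ge1 hn
    have hcast : ((j * 2 ^ (kk n - l) : ℕ) : ℝ) = (j : ℝ) / 2 ^ (l + 1) * 2 ^ (kk n + 1) := by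
      rw [hpow]; push_cast; field_simp
    have h2p : (0 : ℝ) < 2 ^ (kk n + 1) := by positivity
    have hlow : ((2 * ii n - 2 : ℕ) : ℝ) < ((j * 2 ^ (kk n - l) : ℕ) : ℝ) := by
      rw [hcast]
      have h4 : al n * 2 ^ (kk n + 1) = 2 * (ii n : ℝ) - 2 := by
        rw [al]; field_simp
      have h3 : ((2 * ii n - 2 : ℕ) : ℝ) = 2 * (ii n : ℝ) - 2 := by
        push_cast [Nat.cast_sub (by omega : 2 ≤ 2 * ii n)]; ring
      rw [h3, ← h4]
      exact mul_lt_mul_of_pos_right hmem1 h2p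
    have hhigh : ((j * 2 ^ (kk n - l) : ℕ) : ℝ) < ((2 * ii n : ℕ) : ℝ) := by
      rw [hcast]
      have h4 : ga n * 2 ^ (kk n + 1) = 2 * (ii n : ℝ) := by
        rw [ga]; field_simp
      have h3 : ((2 * ii n : ℕ) : ℝ) = 2 * (ii n : ℝ) := by push_cast; ring
      rw [h3, ← h4]
      exact mul_lt_mul_of_pos_right hmem2 h2p
    have hlowN : 2 * ii n - 2 < j * 2 ^ (kk n - l) := by exact_mod_cast hlow
    have hhighN : j * 2 ^ (kk n - l) < 2 * ii n := by exact_mod_cast hhigh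
    have heq : j * 2 ^ (kk n - l) = 2 * ii n - 1 := by omega
    rcases Nat.lt_or_ge l (kk n) with hlt | hge
    · have hdvd : 2 ∣ j * 2 ^ (kk n - l) := Dvd.dvd.mul_left (dvd_pow_self 2 (by omega)) j
      omega
    · have hleq : l = kk n := by omega
      have hrii : r ≤ ii n - 1 := by rw [hleq] at hmeq; omega
      have h20 : 2 ^ (kk n - l) = 1 := by rw [hleq]; simp
      rw [h20] at heq
      omega
  have hcast2 : ((2 * r - 2 : ℕ) : ℝ) = 2 * (r : ℝ) - 2 := by
    push_cast [Nat.cast_sub (by omega : 2 ≤ 2 * r)]; ring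
  have hcast1 : ((2 * r - 1 : ℕ) : ℝ) = 2 * (r : ℝ) - 1 := by
    push_cast [Nat.cast_sub (by omega : 1 ≤ 2 * r)]; ring
  have hcast0 : ((2 * r : ℕ) : ℝ) = 2 * (r : ℝ) := by push_cast; ring
  have hA : A ∉ Set.Ioo (al n) (ga n) := by
    have := hexcl (2 * r - 2) (by omega); rwa [hcast2] at this
  have hB : B ∉ Set.Ioo (al n) (ga n) := by
    have := hexcl (2 * r - 1) (by omega); rwa [hcast1] at this
  have hC : C ∉ Set.Ioo (al n) (ga n) := by
    have := hexcl (2 * r) (by omega); rwa [hcast0] at this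
  have hAB : A < B := by
    rw [hA_def, hB_def, div_lt_div_iff_of_pos_right (by positivity)]; linarith
  have hBC : B < C := by
    rw [hB_def, hC_def, div_lt_div_iff_of_pos_right (by positivity)]; linarith
  simp only [Set.mem_Ioo, not_and, not_lt] at hA hB hC
  rcases le_or_gt (ga n) A with hcA | hcA
  · refine ⟨0, fun x hx => ?_⟩
    obtain ⟨hx1, hx2⟩ := hx
    rw [hform x]
    simp only [Set.indicator_apply, Set.mem_Icc, Set.mem_Ioc]
    rw [if_neg (by push_neg; intro h; linarith), if_neg (by push_neg; intro h; linarith)]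
    ring
  · have hA' : A ≤ al n := by by_contra h; push_neg at h; linarith [hA h]
    rcases le_or_gt (ga n) B with hcB | hcB
    · refine ⟨1, fun x hx => ?_⟩
      obtain ⟨hx1, hx2⟩ := hx
      rw [hform x]
      simp only [Set.indicator_apply, Set.mem_Icc, Set.mem_Ioc]
      rw [if_pos ⟨by linarith, by linarith⟩, if_neg (by push_neg; intro h; linarith)]
      ring
    · have hB' : B ≤ al n := by by_contra h; push_neg at h; linarith [hB h]
      rcases le_or_gt (ga n) C with hcC | hcC
      · refine ⟨-1, fun x hx => ?_⟩
        obtain ⟨hx1, hx2⟩ := hx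
        rw [hform x]
        simp only [Set.indicator_apply, Set.mem_Icc, Set.mem_Ioc]
        rw [if_neg (by push_neg; intro h; linarith), if_pos ⟨by linarith, by linarith⟩]
        ring
      · have hC' : C ≤ al n := by by_contra h; push_neg at h; linarith [hC h]
        refine ⟨0, fun x hx => ?_⟩
        obtain ⟨hx1, hx2⟩ := hx
        rw [hform x]
        simp only [Set.indicator_apply, Set.mem_Icc, Set.mem_Ioc]
        rw [if_neg (by push_neg; intro h; linarith), if_neg (by push_neg; intro h; linarith)]
        ring

end Haar

section Helpers

lemma ioo_int (φ : ℝ → ℝ) {p q : ℝ} (h : p ≤ q) :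
    ∫ x in Set.Ioo p q, φ x = ∫ x in p..q, φ x := by
  rw [intervalIntegral.integral_of_le h, integral_Ioc_eq_integral_Ioo]

lemma integral_const_on (φ : ℝ → ℝ) {p q c : ℝ} (hpq : p ≤ q)
    (h : ∀ x ∈ Set.Ioo p q, φ x = c) : ∫ x in p..q, φ x = c * (q - p) := by
  rw [intervalIntegral.integral_of_le hpq, integral_Ioc_eq_integral_Ioo,
    setIntegral_congr_fun measurableSet_Ioo h, setIntegral_const, Real.volume_real_Ioo_of_le hpq,
    smul_eq_mul, mul_comm]

lemma disj_order {a b a' b' : ℝ} (hab : a < b) (ha'b' : a' < b')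
    (h : Disjoint (Set.Ioo a b) (Set.Ioo a' b')) : b ≤ a' ∨ b' ≤ a := by
  by_contra hcon
  push_neg at hcon
  obtain ⟨h1, h2⟩ := hcon
  set x := (max a a' + min b b') / 2 with hx
  have hmax : max a a' < min b b' := by
    rw [max_lt_iff, lt_min_iff, lt_min_iff]
    exact ⟨⟨hab, h2⟩, ⟨h1, ha'b'⟩⟩
  have hx1 : a < x := by
    have := le_max_left a a'; rw [hx]; linarith
  have hx2 : a' < x := by
    have := le_max_right a a'; rw [hx]; linarith
  have hx3 : x < b := by
    have := min_le_left b b'; rw [hx]; linarith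
  have hx4 : x < b' := by
    have := min_le_right b b'; rw [hx]; linarith
  exact Set.disjoint_left.mp h ⟨hx1, hx3⟩ ⟨hx2, hx4⟩

lemma order_disj {a b a' b' : ℝ} (h : b ≤ a' ∨ b' ≤ a) :
    Disjoint (Set.Ioo a b) (Set.Ioo a' b') := by
  rw [Set.disjoint_left]
  rintro x ⟨h1, h2⟩ ⟨h3, h4⟩
  rcases h with h | h <;> linarith

end Helpers

/-- For `X` with a normalized 1-symmetric basis, the partial sums of the
Haar expansion are monotone in the `JF_X` norm: for every `n ≥ 1` and scalars
`a_1, …, a_{n+1}`, `‖Σ_{i=1}^n a_i h_i‖_{JF_X} ≤ ‖Σ_{i=1}^{n+1} a_i h_i‖_{JF_X}`.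
Consequently the Haar system is a monotone Schauder basis of `JF_X`. -/
theorem haar_partial_sums_monotone_in_JFX
    {X : Type*} [NormedAddCommGroup X] [NormedSpace ℝ X]
    (e : ℕ → X) (he : IsSymmetricBasis e)
    (n : ℕ) (hn : 1 ≤ n) (a : ℕ → ℝ) :
    JFNorm1 e (fun x => ∑ i ∈ Finset.Icc 1 n, a i * haar i x) ≤
      JFNorm1 e (fun x => ∑ i ∈ Finset.Icc 1 (n + 1), a i * haar i x) := by
  classical
  set f : ℝ → ℝ := fun x => ∑ i ∈ Finset.Icc 1 n, a i * haar i x with hf_def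
  set g : ℝ → ℝ := fun x => ∑ i ∈ Finset.Icc 1 (n + 1), a i * haar i x with hg_def
  have hf_int : Integrable f (volume : Measure ℝ) := by
    rw [hf_def]
    exact integrable_finset_sum _ fun m _ => (haar_integrable m).const_mul (a m)
  have hg_int : Integrable g (volume : Measure ℝ) := by
    rw [hg_def]
    exact integrable_finset_sum _ fun m _ => (haar_integrable m).const_mul (a m)
  have hfg : ∀ x, g x = f x + a (n + 1) * haar (n + 1) x := by
    intro x
    rw [hg_def, hf_def]
    exact Finset.sum_Icc_succ_top (by omega) _
  have hfi : ∀ s t : ℝ, IntervalIntegrable f volume s t := fun s t => hf_int.intervalIntegrable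
  have hgi : ∀ s t : ℝ, IntervalIntegrable g volume s t := fun s t => hg_int.intervalIntegrable
  have hhi : ∀ s t : ℝ, IntervalIntegrable (haar (n + 1)) volume s t :=
    fun s t => (haar_integrable (n + 1)).intervalIntegrable
  have hal0 : 0 ≤ al n := al_nonneg hn
  have halbe : al n < be n := al_lt_be
  have hbega : be n < ga n := be_lt_ga
  have halga : al n < ga n := al_lt_ga
  have hga1 : ga n ≤ 1 := ga_le_one
  have hmid : be n - al n = ga n - be n := mid_eq
  -- the constant value of f on (al n, ga n)
  have hcon : ∀ m : ℕ, ∃ cm : ℝ, 1 ≤ m → m ≤ n → ∀ x ∈ Set.Ioo (al n) (ga n), haar m x = cm := by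
    intro m
    by_cases h : 1 ≤ m ∧ m ≤ n
    · obtain ⟨cm, hcm⟩ := haar_const_on hn h.1 h.2
      exact ⟨cm, fun _ _ => hcm⟩
    · exact ⟨0, fun h1 h2 => absurd ⟨h1, h2⟩ h⟩
  choose cf hcf using hcon
  set c : ℝ := ∑ m ∈ Finset.Icc 1 n, a m * cf m with hc_def
  have hfc : ∀ x ∈ Set.Ioo (al n) (ga n), f x = c := by
    intro x hx
    rw [hf_def, hc_def]
    exact Finset.sum_congr rfl fun m hm => by
      rw [hcf m (Finset.mem_Icc.mp hm).1 (Finset.mem_Icc.mp hm).2 x hx]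
  have hintf : ∀ s t : ℝ, al n ≤ s → s ≤ t → t ≤ ga n → ∫ x in s..t, f x = c * (t - s) :=
    fun s t h1 h2 h3 => integral_const_on f h2
      (fun x hx => hfc x ⟨lt_of_le_of_lt h1 hx.1, lt_of_lt_of_le hx.2 h3⟩)
  have hinth0 : ∀ s t : ℝ, s ≤ t → (t ≤ al n ∨ ga n ≤ s) →
      ∫ x in s..t, haar (n + 1) x = 0 := by
    intro s t h1 h2
    have := integral_const_on (haar (n + 1)) h1 (c := 0) (fun x hx => by
      apply haar_succ_zero_outside hn
      rcases h2 with h | h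
      · exact Or.inl (lt_of_lt_of_le hx.2 h)
      · exact Or.inr (lt_of_le_of_lt h hx.1))
    simpa using this
  have hinthmid : ∫ x in (al n)..(ga n), haar (n + 1) x = 0 := by
    have h1 : ∫ x in (al n)..(be n), haar (n + 1) x = 1 * (be n - al n) :=
      integral_const_on _ halbe.le (fun x hx => haar_succ_one hn hx.1 hx.2)
    have h2 : ∫ x in (be n)..(ga n), haar (n + 1) x = (-1) * (ga n - be n) :=
      integral_const_on _ hbega.le (fun x hx => haar_succ_negone hn hx.1 hx.2)
    have h3 := intervalIntegral.integral_add_adjacent_intervals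
      (hhi (al n) (be n)) (hhi (be n) (ga n))
    rw [← h3, h1, h2]
    linarith
  have hsplit_g : ∀ s t : ℝ, ∫ x in s..t, g x =
      (∫ x in s..t, f x) + a (n + 1) * ∫ x in s..t, haar (n + 1) x := by
    intro s t
    have h1 : ∫ x in s..t, g x = ∫ x in s..t, (f x + a (n + 1) * haar (n + 1) x) :=
      intervalIntegral.integral_congr (fun x _ => hfg x)
    rw [h1, intervalIntegral.integral_add (hfi s t) ((hhi s t).const_mul _),
      intervalIntegral.integral_const_mul]
  have hint0 : ∀ t : ℝ, 0 ≤ t → (t ≤ al n ∨ ga n ≤ t) →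
      ∫ x in (0:ℝ)..t, haar (n + 1) x = 0 := by
    intro t h0 h
    rcases h with h | h
    · exact hinth0 0 t h0 (Or.inl h)
    · have e1 := intervalIntegral.integral_add_adjacent_intervals (hhi 0 (al n)) (hhi (al n) (ga n))
      have e2 := intervalIntegral.integral_add_adjacent_intervals (hhi 0 (ga n)) (hhi (ga n) t)
      have e3 := hinth0 0 (al n) hal0 (Or.inl le_rfl)
      have e4 := hinth0 (ga n) t h (Or.inr le_rfl)
      rw [e3, hinthmid] at e1
      rw [e4] at e2
      linarith
  set G : ℝ → ℝ := fun t => ∫ x in (0:ℝ)..t, g x with hG_def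
  set Ff : ℝ → ℝ := fun t => ∫ x in (0:ℝ)..t, f x with hFf_def
  have hGF : ∀ t : ℝ, 0 ≤ t → (t ≤ al n ∨ ga n ≤ t) → G t = Ff t := by
    intro t h0 h
    rw [hG_def, hFf_def]
    simp only
    rw [hsplit_g 0 t, hint0 t h0 h]
    ring
  have hGsub : ∀ p q : ℝ, ∫ x in p..q, g x = G q - G p := by
    intro p q
    have := intervalIntegral.integral_add_adjacent_intervals (hgi 0 p) (hgi p q)
    rw [hG_def]; simp only; linarith
  have hFfsub : ∀ p q : ℝ, ∫ x in p..q, f x = Ff q - Ff p := by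
    intro p q
    have := intervalIntegral.integral_add_adjacent_intervals (hfi 0 p) (hfi p q)
    rw [hFf_def]; simp only; linarith
  -- unfold both JF norms
  unfold JFNorm1
  -- boundedness of the right-hand set
  have hbdd : BddAbove {r : ℝ | ∃ (m : ℕ) (A B : Fin m → ℝ),
      (∀ j, 0 ≤ A j ∧ A j < B j ∧ B j ≤ 1) ∧
      (Pairwise fun i j => Disjoint (Set.Ioo (A i) (B i)) (Set.Ioo (A j) (B j))) ∧
      r = ‖∑ j : Fin m, (∫ x in Set.Ioo (A j) (B j), g x) • e (j : ℕ)‖} := by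
    refine ⟨∫ x in Set.Ioo (0:ℝ) 1, |g x|, ?_⟩
    rintro r ⟨m, A, B, hAB, hdisj, rfl⟩
    calc ‖∑ j : Fin m, (∫ x in Set.Ioo (A j) (B j), g x) • e (j : ℕ)‖
        ≤ ∑ j : Fin m, ‖(∫ x in Set.Ioo (A j) (B j), g x) • e (j : ℕ)‖ := norm_sum_le _ _
      _ = ∑ j : Fin m, |∫ x in Set.Ioo (A j) (B j), g x| := by
          refine Finset.sum_congr rfl fun j _ => ?_
          rw [norm_smul, he.1, mul_one, Real.norm_eq_abs]
      _ ≤ ∑ j : Fin m, ∫ x in Set.Ioo (A j) (B j), |g x| := by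
          refine Finset.sum_le_sum fun j _ => ?_
          have := norm_integral_le_integral_norm (μ := volume.restrict (Set.Ioo (A j) (B j))) g
          simpa [Real.norm_eq_abs] using this
      _ = ∫ x in ⋃ j : Fin m, Set.Ioo (A j) (B j), |g x| := by
          rw [integral_iUnion_fintype (fun j => measurableSet_Ioo)
            (fun i j hij => hdisj hij) (fun j => hg_int.abs.integrableOn)]
      _ ≤ ∫ x in Set.Ioo (0:ℝ) 1, |g x| := by
          apply setIntegral_mono_set hg_int.abs.integrableOn
            (Filter.Eventually.of_forall fun x => abs_nonneg _)
          refine HasSubset.Subset.eventuallyLE ?_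
          refine Set.iUnion_subset fun j x hx => ?_
          exact ⟨lt_of_le_of_lt (hAB j).1 hx.1, lt_of_lt_of_le hx.2 (hAB j).2.2⟩
  have h0mem : (0:ℝ) ∈ {r : ℝ | ∃ (m : ℕ) (A B : Fin m → ℝ),
      (∀ j, 0 ≤ A j ∧ A j < B j ∧ B j ≤ 1) ∧
      (Pairwise fun i j => Disjoint (Set.Ioo (A i) (B i)) (Set.Ioo (A j) (B j))) ∧
      r = ‖∑ j : Fin m, (∫ x in Set.Ioo (A j) (B j), g x) • e (j : ℕ)‖} := by
    refine ⟨0, (fun j => j.elim0), (fun j => j.elim0), (fun j => j.elim0),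
      (fun i => i.elim0), by simp⟩
  refine Real.sSup_le ?_ (le_csSup hbdd h0mem)
  rintro r ⟨m, A, B, hAB, hdisj, rfl⟩
  suffices hS : ∃ A' B' : Fin m → ℝ,
      (∀ j, 0 ≤ A' j ∧ A' j < B' j ∧ B' j ≤ 1) ∧
      (Pairwise fun i j => Disjoint (Set.Ioo (A' i) (B' i)) (Set.Ioo (A' j) (B' j))) ∧
      (∀ j : Fin m, |∫ x in Set.Ioo (A j) (B j), f x| ≤ |∫ x in Set.Ioo (A' j) (B' j), g x|) by
    obtain ⟨A', B', h1, h2, h3⟩ := hS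
    refine le_trans ?_ (le_csSup hbdd ⟨m, A', B', h1, h2, rfl⟩)
    set V : ℕ → ℝ := fun t => if h : t < m then ∫ x in Set.Ioo (A ⟨t, h⟩) (B ⟨t, h⟩), f x else 0
      with hV
    set W : ℕ → ℝ := fun t => if h : t < m then ∫ x in Set.Ioo (A' ⟨t, h⟩) (B' ⟨t, h⟩), g x else 0
      with hW
    have e1 : ∑ j : Fin m, (∫ x in Set.Ioo (A j) (B j), f x) • e (j : ℕ) =
        ∑ t ∈ Finset.range m, V t • e t := by
      rw [← Fin.sum_univ_eq_sum_range (fun t => V t • e t) m]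
      refine Finset.sum_congr rfl fun i _ => ?_
      rw [hV]
      simp only [Fin.is_lt, dif_pos, Fin.eta]
    have e2 : ∑ j : Fin m, (∫ x in Set.Ioo (A' j) (B' j), g x) • e (j : ℕ) =
        ∑ t ∈ Finset.range m, W t • e t := by
      rw [← Fin.sum_univ_eq_sum_range (fun t => W t • e t) m]
      refine Finset.sum_congr rfl fun i _ => ?_
      rw [hW]
      simp only [Fin.is_lt, dif_pos, Fin.eta]
    rw [e1, e2]
    refine uncond he (Finset.range m) V W fun t ht => ?_
    have htm : t < m := Finset.mem_range.mp ht
    rw [hV, hW]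
    simp only [dif_pos htm]
    exact h3 ⟨t, htm⟩
  by_cases hc0 : c = 0
  -- ===================== case c = 0 =====================
  · set A' : Fin m → ℝ := fun j =>
      if A j < al n ∧ al n < B j ∧ B j ≤ ga n then A j
      else if al n ≤ A j ∧ A j < ga n ∧ ga n < B j then ga n else A j with hA'
    set B' : Fin m → ℝ := fun j =>
      if A j < al n ∧ al n < B j ∧ B j ≤ ga n then al n
      else if al n ≤ A j ∧ A j < ga n ∧ ga n < B j then B j else B j with hB'
    have hsub : ∀ j, Set.Ioo (A' j) (B' j) ⊆ Set.Ioo (A j) (B j) := by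
      intro j
      obtain ⟨h0A, hABj, hB1⟩ := hAB j
      rw [hA', hB']
      simp only
      split_ifs with h1 h2
      · exact Set.Ioo_subset_Ioo le_rfl (le_of_lt h1.2.1)
      · exact Set.Ioo_subset_Ioo (le_of_lt h2.2.1) le_rfl
      · exact subset_rfl
    refine ⟨A', B', ?_, ?_, ?_⟩
    · intro j
      obtain ⟨h0A, hABj, hB1⟩ := hAB j
      rw [hA', hB']
      simp only
      split_ifs with h1 h2
      · exact ⟨h0A, h1.1, by linarith⟩
      · exact ⟨by linarith, h2.2.2, hB1⟩
      · exact ⟨h0A, hABj, hB1⟩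
    · exact fun i j hij => ((hdisj hij).mono (hsub i) (hsub j))
    · intro j
      obtain ⟨h0A, hABj, hB1⟩ := hAB j
      rw [hA', hB']
      simp only
      split_ifs with h1 h2
      · -- straddles al: new interval (A j, al n)
        obtain ⟨ha1, ha2, ha3⟩ := h1
        rw [ioo_int f hABj.le, ioo_int g ha1.le]
        have ef : ∫ x in (A j)..(B j), f x =
            (∫ x in (A j)..(al n), f x) + ∫ x in (al n)..(B j), f x :=
          (intervalIntegral.integral_add_adjacent_intervals (hfi _ _) (hfi _ _)).symm
        rw [ef, hintf (al n) (B j) le_rfl ha2.le ha3, hc0,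
          hsplit_g (A j) (al n), hinth0 (A j) (al n) ha1.le (Or.inl le_rfl)]
        ring_nf
        exact le_rfl
      · -- straddles ga: new interval (ga n, B j)
        obtain ⟨hb1, hb2, hb3⟩ := h2
        rw [ioo_int f hABj.le, ioo_int g hb3.le]
        have ef : ∫ x in (A j)..(B j), f x =
            (∫ x in (A j)..(ga n), f x) + ∫ x in (ga n)..(B j), f x :=
          (intervalIntegral.integral_add_adjacent_intervals (hfi _ _) (hfi _ _)).symm
        rw [ef, hintf (A j) (ga n) hb1 hb2.le le_rfl, hc0,
          hsplit_g (ga n) (B j), hinth0 (ga n) (B j) hb3.le (Or.inr le_rfl)]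
        ring_nf
        exact le_rfl
      · -- remaining cases
        rw [ioo_int f hABj.le, ioo_int g hABj.le]
        rcases le_or_gt (B j) (al n) with h3 | h3
        · rw [hsplit_g (A j) (B j), hinth0 (A j) (B j) hABj.le (Or.inl h3)]
          ring_nf
          exact le_rfl
        rcases le_or_gt (ga n) (A j) with h4 | h4
        · rw [hsplit_g (A j) (B j), hinth0 (A j) (B j) hABj.le (Or.inr h4)]
          ring_nf
          exact le_rfl
        rcases le_or_gt (B j) (ga n) with h5 | h5
        · -- interior: al ≤ A, B ≤ ga
          have hA : al n ≤ A j := by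
            by_contra hcontra
            push_neg at hcontra
            exact h1 ⟨hcontra, h3, h5⟩
          rw [hintf (A j) (B j) hA hABj.le h5, hc0]
          simpa using abs_nonneg _
        · -- cover: A < al and ga < B
          have hA : A j < al n := by
            by_contra hcontra
            push_neg at hcontra
            exact h2 ⟨hcontra, h4, h5⟩
          have eh : ∫ x in (A j)..(B j), haar (n+1) x = 0 := by
            have u1 := intervalIntegral.integral_add_adjacent_intervals
              (hhi (A j) (al n)) (hhi (al n) (ga n))
            have u2 := intervalIntegral.integral_add_adjacent_intervals
              (hhi (A j) (ga n)) (hhi (ga n) (B j))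
            have u3 := hinth0 (A j) (al n) hA.le (Or.inl le_rfl)
            have u4 := hinth0 (ga n) (B j) h5.le (Or.inr le_rfl)
            rw [u3, hinthmid] at u1
            rw [u4] at u2
            linarith
          rw [hsplit_g (A j) (B j), eh]
          ring_nf
          exact le_rfl
  -- ===================== case c ≠ 0 =====================
  · set F : ℝ → ℝ := fun t => ∫ x in (al n)..t, g x with hF_def
    have hFcont : Continuous F := hg_int.continuous_primitive (al n)
    have hFal : F (al n) = 0 := intervalIntegral.integral_same
    have hFga : F (ga n) = c * (ga n - al n) := by
      rw [hF_def]
      simp only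
      rw [hsplit_g (al n) (ga n), hinthmid, hintf (al n) (ga n) le_rfl halga.le le_rfl]
      ring
    set τ : ℝ → ℝ := fun y => sInf {t | t ∈ Set.Icc (al n) (ga n) ∧ F t = y} with hτ
    have htar : ∀ d L : ℝ, 0 ≤ L → L ≤ d → c * L ∈ Set.uIcc 0 (c * d) := by
      intro d L h1 h2
      rcases le_or_gt 0 c with h | h
      · exact Set.mem_uIcc.mpr (Or.inl ⟨by nlinarith, by nlinarith⟩)
      · exact Set.mem_uIcc.mpr (Or.inr ⟨by nlinarith, by nlinarith⟩)
    have htau : ∀ L : ℝ, 0 ≤ L → L ≤ ga n - al n →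
        (τ (c * L) ∈ Set.Icc (al n) (ga n) ∧ F (τ (c * L)) = c * L) := by
      intro L h1 h2
      have hmem : c * L ∈ Set.uIcc (F (al n)) (F (ga n)) := by
        rw [hFal, hFga]
        exact htar _ _ h1 h2
      obtain ⟨t, ht1, ht2⟩ := intermediate_value_uIcc hFcont.continuousOn hmem
      rw [Set.uIcc_of_le halga.le] at ht1
      have hne : {t | t ∈ Set.Icc (al n) (ga n) ∧ F t = c * L}.Nonempty := ⟨t, ht1, ht2⟩
      have hcl : IsClosed {t | t ∈ Set.Icc (al n) (ga n) ∧ F t = c * L} := by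
        have : {t | t ∈ Set.Icc (al n) (ga n) ∧ F t = c * L} =
            Set.Icc (al n) (ga n) ∩ F ⁻¹' {c * L} := by
          ext u; simp [Set.mem_preimage]
        rw [this]
        exact isClosed_Icc.inter (IsClosed.preimage hFcont isClosed_singleton)
      have hbdd' : BddBelow {t | t ∈ Set.Icc (al n) (ga n) ∧ F t = c * L} :=
        ⟨al n, fun u hu => hu.1.1⟩
      have := hcl.csInf_mem hne hbdd'
      exact ⟨this.1, this.2⟩
    have htau_mono : ∀ L L' : ℝ, 0 ≤ L → L ≤ L' → L' ≤ ga n - al n →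
        τ (c * L) ≤ τ (c * L') := by
      intro L L' h1 h2 h3
      obtain ⟨ht'1, ht'2⟩ := htau L' (le_trans h1 h2) h3
      have hmem : c * L ∈ Set.uIcc (F (al n)) (F (τ (c * L'))) := by
        rw [hFal, ht'2]
        exact htar _ _ h1 h2
      obtain ⟨t, ht1, ht2⟩ := intermediate_value_uIcc hFcont.continuousOn hmem
      rw [Set.uIcc_of_le ht'1.1] at ht1
      have : t ∈ {t | t ∈ Set.Icc (al n) (ga n) ∧ F t = c * L} :=
        ⟨⟨ht1.1, le_trans ht1.2 ht'1.2⟩, ht2⟩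
      exact le_trans (csInf_le ⟨al n, fun u hu => hu.1.1⟩ this) ht1.2
    set Φ : ℝ → ℝ := fun t => if al n < t ∧ t < ga n then τ (c * (t - al n)) else t with hΦ
    have hΦ_in : ∀ t : ℝ, al n < t → t < ga n →
        Φ t ∈ Set.Icc (al n) (ga n) ∧ F (Φ t) = c * (t - al n) := by
      intro t h1 h2
      have := htau (t - al n) (by linarith) (by linarith)
      rw [hΦ]
      simp only [if_pos (And.intro h1 h2)]
      exact this
    have hΦ_mono : ∀ p q : ℝ, p ≤ q → Φ p ≤ Φ q := by
      intro p q hpq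
      rw [hΦ]
      simp only
      split_ifs with h1 h2 h2
      · exact htau_mono _ _ (by linarith [h1.1]) (by linarith) (by linarith [h2.2])
      · -- p inside, q outside: q ≥ ga
        have hq : ga n ≤ q := by
          rcases not_and_or.mp h2 with h | h
          · push_neg at h; linarith [h1.1]
          · push_neg at h; exact h
        exact le_trans (htau (p - al n) (by linarith [h1.1]) (by linarith [h1.2])).1.2 hq
      · -- p outside, q inside: p ≤ al
        have hp : p ≤ al n := by
          rcases not_and_or.mp h1 with h | h
          · push_neg at h; exact h
          · push_neg at h; linarith [h2.2]
        exact le_trans hp (htau (q - al n) (by linarith [h2.1]) (by linarith [h2.2])).1.1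
      · exact hpq
    have hΦ_strict : ∀ p q : ℝ, p < q → Φ p < Φ q := by
      intro p q hpq
      have hle : Φ p ≤ Φ q := hΦ_mono p q hpq.le
      rcases eq_or_lt_of_le hle with heq | hlt
      · exfalso
        rw [hΦ] at heq
        simp only at heq
        by_cases h1 : al n < p ∧ p < ga n <;> by_cases h2 : al n < q ∧ q < ga n
        · rw [if_pos h1, if_pos h2] at heq
          have e1 := (htau (p - al n) (by linarith [h1.1]) (by linarith [h1.2])).2
          have e2 := (htau (q - al n) (by linarith [h1.1, hpq]) (by linarith [h2.2])).2
          rw [heq] at e1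
          rw [e1] at e2
          have : p - al n = q - al n := mul_left_cancel₀ hc0 e2
          linarith
        · rw [if_pos h1, if_neg h2] at heq
          have hq : ga n ≤ q := by
            rcases not_and_or.mp h2 with h | h
            · push_neg at h; linarith [h1.1]
            · push_neg at h; exact h
          have ht := htau (p - al n) (by linarith [h1.1]) (by linarith [h1.2])
          have hgaq : ga n ≤ τ (c * (p - al n)) := by rw [heq]; exact hq
          have hqga : τ (c * (p - al n)) = ga n := le_antisymm ht.1.2 hgaq
          have e2 := ht.2
          rw [hqga, hFga] at e2
          have : ga n - al n = p - al n := mul_left_cancel₀ hc0 e2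
          linarith [h1.2]
        · rw [if_neg h1, if_pos h2] at heq
          have hp : p ≤ al n := by
            rcases not_and_or.mp h1 with h | h
            · push_neg at h; exact h
            · push_neg at h; linarith [h2.2]
          have ht := htau (q - al n) (by linarith [h2.1]) (by linarith [h2.2])
          have hpal : τ (c * (q - al n)) = al n := le_antisymm (by rw [← heq]; exact hp) ht.1.1
          have e2 := ht.2
          rw [hpal, hFal] at e2
          have e3 : c * (q - al n) = c * 0 := by rw [← e2]; ring
          have := mul_left_cancel₀ hc0 e3
          linarith [h2.1]
        · rw [if_neg h1, if_neg h2] at heq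
          linarith
      · exact hlt
    have hΦ_range : ∀ t : ℝ, 0 ≤ t → t ≤ 1 → 0 ≤ Φ t ∧ Φ t ≤ 1 := by
      intro t h0 h1
      rw [hΦ]
      simp only
      split_ifs with h
      · have := (htau (t - al n) (by linarith [h.1]) (by linarith [h.2])).1
        exact ⟨le_trans hal0 this.1, le_trans this.2 hga1⟩
      · exact ⟨h0, h1⟩
    have hGΦ : ∀ t : ℝ, 0 ≤ t → t ≤ 1 → G (Φ t) = Ff t := by
      intro t h0 h1
      rw [hΦ]
      simp only
      split_ifs with h
      · obtain ⟨hin, hFv⟩ := by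
          have := htau (t - al n) (by linarith [h.1]) (by linarith [h.2])
          exact this
        have e1 := intervalIntegral.integral_add_adjacent_intervals
          (hgi 0 (al n)) (hgi (al n) (τ (c * (t - al n))))
        have e2 : G (τ (c * (t - al n))) = G (al n) + F (τ (c * (t - al n))) := by
          rw [hG_def, hF_def]; simp only; linarith
        have e3 : Ff t = Ff (al n) + c * (t - al n) := by
          have e4 := intervalIntegral.integral_add_adjacent_intervals (hfi 0 (al n)) (hfi (al n) t)
          have e5 := hintf (al n) t le_rfl (by linarith [h.1]) (by linarith [h.2])
          rw [hFf_def]; simp only; linarith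
        rw [e2, e3, hFv, hGF (al n) hal0 (Or.inl le_rfl)]
      · have ht : t ≤ al n ∨ ga n ≤ t := by
          rcases not_and_or.mp h with h' | h'
          · push_neg at h'; exact Or.inl h'
          · push_neg at h'; exact Or.inr h'
        exact hGF t h0 ht
    have key : ∀ p q : ℝ, 0 ≤ p → p ≤ q → q ≤ 1 →
        ∫ x in Set.Ioo (Φ p) (Φ q), g x = ∫ x in Set.Ioo p q, f x := by
      intro p q h0 hpq h1
      rw [ioo_int g (hΦ_mono p q hpq), ioo_int f hpq]
      rw [hGsub, hFfsub, hGΦ p h0 (le_trans hpq h1), hGΦ q (le_trans h0 hpq) h1]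
    refine ⟨fun j => Φ (A j), fun j => Φ (B j), ?_, ?_, ?_⟩
    · intro j
      obtain ⟨h0A, hABj, hB1⟩ := hAB j
      exact ⟨(hΦ_range _ h0A (by linarith)).1, hΦ_strict _ _ hABj,
        (hΦ_range _ (by linarith) hB1).2⟩
    · intro i j hij
      have h := disj_order (hAB i).2.1 (hAB j).2.1 (hdisj hij)
      apply order_disj
      rcases h with h | h
      · exact Or.inl (hΦ_mono _ _ h)
      · exact Or.inr (hΦ_mono _ _ h)
    · intro j
      obtain ⟨h0A, hABj, hB1⟩ := hAB j
      rw [key (A j) (B j) h0A hABj.le hB1]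

end
end

section
/- Let X be a real Banach space with a normalized 1-symmetric basis (e_n). Let (A_n)_{n≥1} be a sequence of pairwise disjoint subintervals of [0,1] that are successive (each A_n lies entirely to the left of A_{n+1}) with μ(A_{2n−1}) = μ(A_{2n}) for every n, and set y_n = χ_{A_{2n−1}} − χ_{A_{2n}}. Then for every finitely supported scalar sequence (α_n): ‖Σ_n α_n e_n‖_X ≤ ‖Σ_n α_n · y_n/μ(A_{2n−1})‖_{JF_X} ≤ 2 ‖Σ_n α_n e_n‖_X; that is, (y_n/μ(A_{2n−1}))_n is 2-equivalent to the unit vector basis (e_n) of X. -/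
open MeasureTheory

noncomputable section

section Aux
open Set Finset

lemma exists_perm_extend (T : Finset ℕ) (q : ℕ → ℕ) (hq : Set.InjOn q ↑T) :
    ∃ π : Equiv.Perm ℕ, ∀ n ∈ T, π n = q n := by
  classical
  induction T using Finset.induction_on with
  | empty => exact ⟨1, by simp⟩
  | @insert n T hn ih =>
    obtain ⟨π', hπ'⟩ := ih (hq.mono (by intro x hx; simp only [Finset.coe_insert, Set.mem_insert_iff]; exact Or.inr hx))
    refine ⟨π'.trans (Equiv.swap (q n) (π' n)), ?_⟩
    intro t ht
    rcases Finset.mem_insert.1 ht with rfl | ht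
    · simp [Equiv.swap_apply_right]
    · have h1 : q t ≠ q n := fun h => hn (by
        have := hq (by simp [ht]) (by simp) h; rwa [this] at ht)
    
      have h2 : q t ≠ π' n := by
        intro h
        have : π' t = π' n := by rw [hπ' t ht, h]
        have : t = n := π'.injective this
        exact hn (this ▸ ht)
      simp [Equiv.trans_apply, hπ' t ht, Equiv.swap_apply_of_ne_of_ne h1 h2]


variable {X : Type*} [NormedAddCommGroup X] [NormedSpace ℝ X] {e : ℕ → X}

lemma symm_apply (he : IsSymmetricBasis e) (T : Finset ℕ) (α : ℕ → ℝ) (π : Equiv.Perm ℕ)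
    (ε : ℕ → ℝ) (hε : ∀ n, ε n = 1 ∨ ε n = -1) :
    ‖∑ n ∈ T, (ε n * α n) • e (π n)‖ = ‖∑ n ∈ T, α n • e n‖ := by
  classical
  set a : ℕ →₀ ℝ := Finsupp.onFinset T (fun n => if n ∈ T then α n else 0)
    (fun n h => by by_contra hn; simp [hn] at h) with ha
  have hsupp : a.support ⊆ T := Finsupp.support_onFinset_subset
  have h1 : (a.sum fun n c => (ε n * c) • e (π n)) = ∑ n ∈ T, (ε n * α n) • e (π n) := by
    rw [Finsupp.sum_of_support_subset a hsupp _ (fun n _ => by simp)]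
    exact Finset.sum_congr rfl (fun n hn => by simp [ha, Finsupp.onFinset_apply, hn])
  have h2 : (a.sum fun n c => c • e n) = ∑ n ∈ T, α n • e n := by
    rw [Finsupp.sum_of_support_subset a hsupp _ (fun n _ => by simp)]
    exact Finset.sum_congr rfl (fun n hn => by simp [ha, Finsupp.onFinset_apply, hn])
  have := he.2.2 a π ε hε
  rwa [h1, h2] at this

lemma norm_subset_le (he : IsSymmetricBasis e) {T s : Finset ℕ} (hT : T ⊆ s) (α : ℕ → ℝ) :
    ‖∑ n ∈ T, α n • e n‖ ≤ ‖∑ n ∈ s, α n • e n‖ := by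
  classical
  set ε : ℕ → ℝ := fun n => if n ∈ T then 1 else -1 with hε
  have key : ‖∑ n ∈ s, (ε n * α n) • e n‖ = ‖∑ n ∈ s, α n • e n‖ := by
    simpa using symm_apply he s α 1 ε (fun n => by by_cases h : n ∈ T <;> simp [hε, h])
  have hdecomp : ∑ n ∈ T, α n • e n
      = (2⁻¹ : ℝ) • ((∑ n ∈ s, α n • e n) + ∑ n ∈ s, (ε n * α n) • e n) := by
    have : ∑ n ∈ T, α n • e n
        = ∑ n ∈ s, (2⁻¹ : ℝ) • (α n • e n + (ε n * α n) • e n) := by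
      rw [← Finset.sum_subset hT (fun x _ hx => by
        simp only [hε, if_neg hx, neg_one_mul, neg_smul, add_neg_cancel, smul_zero])]
      refine Finset.sum_congr rfl (fun n hn => ?_)
      rw [hε]; simp only [if_pos hn, one_mul]
      rw [← two_smul ℝ (α n • e n), smul_smul]
      norm_num
    rw [this, ← Finset.smul_sum, Finset.sum_add_distrib]
  rw [hdecomp]
  rw [norm_smul]
  calc ‖(2⁻¹:ℝ)‖ * ‖(∑ n ∈ s, α n • e n) + ∑ n ∈ s, (ε n * α n) • e n‖
      ≤ 2⁻¹ * (‖∑ n ∈ s, α n • e n‖ + ‖∑ n ∈ s, (ε n * α n) • e n‖) := by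
        rw [Real.norm_eq_abs, abs_of_pos (by norm_num : (0:ℝ) < 2⁻¹)]; gcongr; exact norm_add_le _ _
    _ = ‖∑ n ∈ s, α n • e n‖ := by rw [key]; ring

lemma vertex_bound (he : IsSymmetricBasis e) {M : ℕ} (S : Finset (Fin M)) (p : Fin M → ℕ)
    (s : Finset ℕ) (α : ℕ → ℝ) (hps : ∀ j ∈ S, p j ∈ s) (hinj : Set.InjOn p ↑S) :
    ‖∑ j ∈ S, α (p j) • e (j : ℕ)‖ ≤ ‖∑ n ∈ s, α n • e n‖ := by
  classical
  rcases Nat.eq_zero_or_pos M with rfl | hM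
  · rw [Finset.eq_empty_of_isEmpty S]; simp [norm_nonneg]
  haveI : Nonempty (Fin M) := ⟨⟨0, hM⟩⟩
  set T : Finset ℕ := S.image p with hTdef
  have hTs : T ⊆ s := by
    intro n hn; obtain ⟨j, hj, rfl⟩ := Finset.mem_image.1 hn; exact hps j hj
  set q : ℕ → ℕ := fun n => ((Function.invFunOn p ↑S n : Fin M) : ℕ) with hqdef
  have hqp : ∀ j ∈ S, q (p j) = (j : ℕ) := by
    intro j hj
    have : Function.invFunOn p ↑S (p j) = j := hinj.leftInvOn_invFunOn hj
    simp [hqdef, this]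
  have hq : Set.InjOn q ↑T := by
    intro n1 h1 n2 h2 h
    obtain ⟨j1, hj1, rfl⟩ := Finset.mem_image.1 (by exact_mod_cast h1)
    obtain ⟨j2, hj2, rfl⟩ := Finset.mem_image.1 (by exact_mod_cast h2)
    rw [hqp j1 hj1, hqp j2 hj2] at h
    rw [Fin.val_injective h]
  obtain ⟨π, hπ⟩ := exists_perm_extend T q hq
  have key : ‖∑ n ∈ T, α n • e (π n)‖ = ‖∑ n ∈ T, α n • e n‖ := by
    simpa using symm_apply he T α π (fun _ => 1) (fun n => Or.inl rfl)
  have lhs : ∑ n ∈ T, α n • e (π n) = ∑ j ∈ S, α (p j) • e (j : ℕ) := by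
    rw [hTdef, Finset.sum_image (fun x hx y hy h => hinj hx hy h)]
    refine Finset.sum_congr rfl (fun j hj => ?_)
    rw [hπ (p j) (Finset.mem_image_of_mem p hj), hqp j hj]
  calc ‖∑ j ∈ S, α (p j) • e (j : ℕ)‖ = ‖∑ n ∈ T, α n • e n‖ := by rw [← lhs, key]
    _ ≤ ‖∑ n ∈ s, α n • e n‖ := norm_subset_le he hTs α

lemma subst_aux (he : IsSymmetricBasis e) (s : Finset ℕ) (α : ℕ → ℝ) {M : ℕ} :
    ∀ (N : ℕ) (t : Fin M → ℝ) (p : Fin M → ℕ),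
      (∀ j, 0 ≤ t j) → (∀ j, t j ≠ 0 → p j ∈ s) →
      (∀ n, ∑ j ∈ Finset.univ.filter (fun j => p j = n), t j ≤ 1) →
      (Finset.univ.filter (fun j => t j ≠ 0)).card ≤ N →
      ‖∑ j : Fin M, (t j * α (p j)) • e (j : ℕ)‖ ≤ ‖∑ n ∈ s, α n • e n‖ := by
  classical
  intro N
  induction N with
  | zero =>
    intro t p ht0 htp hcol hcard
    have hz : ∀ j, t j = 0 := by
      intro j; by_contra h
      have : j ∈ Finset.univ.filter (fun j => t j ≠ 0) := by simp [h]
      have := Finset.card_pos.2 ⟨j, this⟩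
      omega
    simp [hz, norm_nonneg]
  | succ N ih =>
    intro t p ht0 htp hcol hcard
    set F := Finset.univ.filter (fun j => t j ≠ 0) with hFdef
    by_cases hF : F = ∅
    · have hz : ∀ j, t j = 0 := by
        intro j; by_contra h
        have : j ∈ F := by simp [hFdef, h]
        simp [hF] at this
      simp [hz, norm_nonneg]
    have hFne : F.Nonempty := Finset.nonempty_of_ne_empty hF
    set S := F.filter (fun j => ∀ j' ∈ F, p j' = p j → j ≤ j') with hSdef
    have hSF : S ⊆ F := Finset.filter_subset _ _
    have htS : ∀ j ∈ S, t j ≠ 0 := fun j hj => (Finset.mem_filter.1 (hSF hj)).2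
    have hrep : ∀ j ∈ F, ∃ j' ∈ S, p j' = p j := by
      intro j hj
      have hCne : (F.filter (fun j' => p j' = p j)).Nonempty :=
        ⟨j, Finset.mem_filter.2 ⟨hj, rfl⟩⟩
      set j₁ := (F.filter (fun j' => p j' = p j)).min' hCne with hj₁def
      have hj₁C := Finset.min'_mem _ hCne
      have hj₁F := (Finset.mem_filter.1 hj₁C).1
      have hj₁p : p j₁ = p j := (Finset.mem_filter.1 hj₁C).2
      refine ⟨j₁, Finset.mem_filter.2 ⟨hj₁F, ?_⟩, hj₁p⟩
      intro j' hj' hpj'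
      exact Finset.min'_le _ _ (Finset.mem_filter.2 ⟨hj', by rw [hpj', hj₁p]⟩)
    have hSne : S.Nonempty := by
      obtain ⟨j, hj⟩ := hFne
      obtain ⟨j', hj', _⟩ := hrep j hj
      exact ⟨j', hj'⟩
    have hScol : ∀ j1 ∈ S, ∀ j2 ∈ S, p j1 = p j2 → j1 = j2 := by
      intro j1 h1 j2 h2 hp
      have m1 := (Finset.mem_filter.1 h1).2 j2 (hSF h2) hp.symm
      have m2 := (Finset.mem_filter.1 h2).2 j1 (hSF h1) hp
      exact le_antisymm m1 m2
    set lam := S.inf' hSne t with hlamdef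
    obtain ⟨j₂, hj₂S, hj₂⟩ := Finset.exists_mem_eq_inf' hSne t
    have hlam_le : ∀ j ∈ S, lam ≤ t j := fun j hj => Finset.inf'_le t hj
    have hlam_pos : 0 < lam := by
      rw [hlamdef, hj₂]
      exact lt_of_le_of_ne (ht0 j₂) (Ne.symm (htS j₂ hj₂S))
    have htle1 : ∀ j : Fin M, t j ≤ 1 := by
      intro j
      calc t j ≤ ∑ j' ∈ Finset.univ.filter (fun j' => p j' = p j), t j' :=
            Finset.single_le_sum (fun i _ => ht0 i) (by simp)
        _ ≤ 1 := hcol (p j)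
    have hlam1 : lam ≤ 1 := by rw [hlamdef, hj₂]; exact htle1 j₂
    have hcard' : F.card ≤ N + 1 := hcard
    by_cases hc : lam = 1
    · -- t is the indicator of S
      have htSone : ∀ j ∈ S, t j = 1 := fun j hj =>
        le_antisymm (htle1 j) (hc ▸ hlam_le j hj)
      have hFS : ∀ j, t j ≠ 0 → j ∈ S := by
        intro j hj
        by_contra hjS
        have hjF : j ∈ F := by simp [hFdef, hj]
        obtain ⟨j', hj'S, hj'p⟩ := hrep j hjF
        have hne : j' ≠ j := fun h => hjS (h ▸ hj'S)
        have : t j' + t j ≤ 1 := by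
          have hsub : {j', j} ⊆ Finset.univ.filter (fun i => p i = p j) := by
            intro i hi
            rcases Finset.mem_insert.1 hi with rfl | hi
            · simp [hj'p]
            · simp [Finset.mem_singleton.1 hi]
          calc t j' + t j = ∑ i ∈ {j', j}, t i := by
                rw [Finset.sum_insert (by simp [hne]), Finset.sum_singleton]
            _ ≤ ∑ i ∈ Finset.univ.filter (fun i => p i = p j), t i :=
                Finset.sum_le_sum_of_subset_of_nonneg hsub (fun i _ _ => ht0 i)
            _ ≤ 1 := hcol (p j)
        have h1 : t j' = 1 := htSone j' hj'S
        have h2 : 0 < t j := lt_of_le_of_ne (ht0 j) (Ne.symm hj)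
        linarith
      have hsum : ∑ j : Fin M, (t j * α (p j)) • e (j : ℕ)
          = ∑ j ∈ S, α (p j) • e (j : ℕ) := by
        rw [← Finset.sum_subset (Finset.subset_univ S) (fun j _ hj => by
          have : t j = 0 := by by_contra h; exact hj (hFS j h)
          simp [this])]
        exact Finset.sum_congr rfl (fun j hj => by rw [htSone j hj, one_mul])
      rw [hsum]
      exact vertex_bound he S p s α (fun j hj => htp j (htS j hj)) (fun x hx y hy h =>
        hScol x hx y hy h)
    · -- peel off the vertex 1_S with weight lam
      have hlam_lt : lam < 1 := lt_of_le_of_ne hlam1 hc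
      have h1l : (0:ℝ) < 1 - lam := by linarith
      set t' : Fin M → ℝ := fun j => if j ∈ S then (t j - lam)/(1-lam) else t j/(1-lam)
        with ht'def
      have ht'0 : ∀ j, 0 ≤ t' j := by
        intro j
        by_cases hj : j ∈ S <;> simp only [ht'def, hj, if_true, if_false]
        · exact div_nonneg (by linarith [hlam_le j hj]) (le_of_lt h1l)
        · exact div_nonneg (ht0 j) (le_of_lt h1l)
      have ht'ne : ∀ j, t' j ≠ 0 → t j ≠ 0 := by
        intro j h
        by_cases hj : j ∈ S
        · exact htS j hj
        · simp only [ht'def, hj, if_false, div_ne_zero_iff] at h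
          exact h.1
      have ht'p : ∀ j, t' j ≠ 0 → p j ∈ s := fun j h => htp j (ht'ne j h)
      have ht'col : ∀ n, ∑ j ∈ Finset.univ.filter (fun j => p j = n), t' j ≤ 1 := by
        intro n
        by_cases hex : ∃ j' ∈ S, p j' = n
        · obtain ⟨j', hj'S, hj'p⟩ := hex
          have heq : ∀ j, t' j = (t j - lam * (if j ∈ S then 1 else 0))/(1-lam) := by
            intro j; by_cases hj : j ∈ S <;> simp [ht'def, hj]
          have : ∑ j ∈ Finset.univ.filter (fun j => p j = n), t' j
              = ((∑ j ∈ Finset.univ.filter (fun j => p j = n), t j)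
                 - lam * ∑ j ∈ Finset.univ.filter (fun j => p j = n),
                     (if j ∈ S then (1:ℝ) else 0))/(1-lam) := by
            rw [Finset.sum_congr rfl (fun j _ => heq j), ← Finset.sum_div,
              Finset.mul_sum, ← Finset.sum_sub_distrib]
          rw [this]
          rw [div_le_one h1l]
          have hone : (1:ℝ) ≤ ∑ j ∈ Finset.univ.filter (fun j => p j = n),
              (if j ∈ S then (1:ℝ) else 0) := by
            have hmem : j' ∈ Finset.univ.filter (fun j => p j = n) := by simp [hj'p]
            calc (1:ℝ) = if j' ∈ S then (1:ℝ) else 0 := by simp [hj'S]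
              _ ≤ _ := Finset.single_le_sum (f := fun j => if j ∈ S then (1:ℝ) else 0)
                  (fun i _ => by positivity) hmem
          have := hcol n
          nlinarith
        · have hz : ∀ j ∈ Finset.univ.filter (fun j => p j = n), t' j = 0 := by
            intro j hj
            have hpj : p j = n := (Finset.mem_filter.1 hj).2
            have hjS : j ∉ S := fun h => hex ⟨j, h, hpj⟩
            have htj : t j = 0 := by
              by_contra h
              obtain ⟨j', hj'S, hj'p⟩ := hrep j (by simp [hFdef, h])
              exact hex ⟨j', hj'S, by rw [hj'p, hpj]⟩
            simp [ht'def, hjS, htj]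
          rw [Finset.sum_eq_zero hz]; norm_num
      have ht'card : (Finset.univ.filter (fun j => t' j ≠ 0)).card ≤ N := by
        have hsub : Finset.univ.filter (fun j => t' j ≠ 0) ⊆ F.erase j₂ := by
          intro j hj
          have hne := (Finset.mem_filter.1 hj).2
          refine Finset.mem_erase.2 ⟨?_, by simp [hFdef, ht'ne j hne]⟩
          rintro rfl
          have : t' j = 0 := by simp [ht'def, hj₂S, ← hj₂, hlamdef]
          exact hne this
        calc (Finset.univ.filter (fun j => t' j ≠ 0)).card ≤ (F.erase j₂).card :=
              Finset.card_le_card hsub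
          _ = F.card - 1 := Finset.card_erase_of_mem (hSF hj₂S)
          _ ≤ N := by omega
      have hterm : ∀ j : Fin M, (t j * α (p j)) • e (j : ℕ)
          = lam • ((if j ∈ S then (1:ℝ) else 0) • (α (p j) • e (j : ℕ)))
            + (1-lam) • ((t' j * α (p j)) • e (j : ℕ)) := by
        intro j
        simp only [smul_smul]
        rw [← add_smul]
        congr 1
        by_cases hj : j ∈ S <;> simp only [ht'def, hj, if_true, if_false]
        · field_simp; ring
        · field_simp; ring
      have hVrw : ∑ j ∈ S, α (p j) • e (j : ℕ)
          = ∑ j : Fin M, (if j ∈ S then (1:ℝ) else 0) • (α (p j) • e (j : ℕ)) := by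
        rw [← Finset.sum_subset (Finset.subset_univ S) (fun j _ hj => by simp [hj])]
        exact Finset.sum_congr rfl (fun j hj => by simp [hj])
      have hdec : ∑ j : Fin M, (t j * α (p j)) • e (j : ℕ)
          = lam • (∑ j ∈ S, α (p j) • e (j : ℕ))
            + (1-lam) • (∑ j : Fin M, (t' j * α (p j)) • e (j : ℕ)) := by
        rw [hVrw, Finset.smul_sum, Finset.smul_sum, ← Finset.sum_add_distrib]
        exact Finset.sum_congr rfl (fun j _ => hterm j)
      have hV : ‖∑ j ∈ S, α (p j) • e (j : ℕ)‖ ≤ ‖∑ n ∈ s, α n • e n‖ :=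
        vertex_bound he S p s α (fun j hj => htp j (htS j hj))
          (fun x hx y hy h => hScol x hx y hy h)
      have hW := ih t' p ht'0 ht'p ht'col ht'card
      rw [hdec]
      calc ‖lam • (∑ j ∈ S, α (p j) • e (j : ℕ))
            + (1-lam) • (∑ j : Fin M, (t' j * α (p j)) • e (j : ℕ))‖
          ≤ lam * ‖∑ j ∈ S, α (p j) • e (j : ℕ)‖
            + (1-lam) * ‖∑ j : Fin M, (t' j * α (p j)) • e (j : ℕ)‖ := by
            refine le_trans (norm_add_le _ _) ?_
            rw [norm_smul, norm_smul, Real.norm_eq_abs, Real.norm_eq_abs,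
              abs_of_pos hlam_pos, abs_of_pos h1l]
        _ ≤ lam * ‖∑ n ∈ s, α n • e n‖ + (1-lam) * ‖∑ n ∈ s, α n • e n‖ :=
            add_le_add (mul_le_mul_of_nonneg_left hV hlam_pos.le)
              (mul_le_mul_of_nonneg_left hW h1l.le)
        _ = ‖∑ n ∈ s, α n • e n‖ := by ring

lemma subst' (he : IsSymmetricBasis e) (s : Finset ℕ) (α : ℕ → ℝ) {M : ℕ} (P : Fin M → ℕ → ℝ)
    (h0 : ∀ j n, 0 ≤ P j n) (hcolsum : ∀ n ∈ s, ∑ j : Fin M, P j n ≤ 1)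
    (hrow : ∀ j : Fin M, ∀ n1 ∈ s, ∀ n2 ∈ s, P j n1 ≠ 0 → P j n2 ≠ 0 → n1 = n2) :
    ‖∑ j : Fin M, (∑ n ∈ s, α n * P j n) • e (j : ℕ)‖ ≤ ‖∑ n ∈ s, α n • e n‖ := by
  classical
  set p : Fin M → ℕ := fun j => if h : ∃ n ∈ s, P j n ≠ 0 then h.choose else 0 with hpdef
  set t : Fin M → ℝ := fun j => if ∃ n ∈ s, P j n ≠ 0 then P j (p j) else 0 with htdef
  have hps : ∀ j : Fin M, (∃ n ∈ s, P j n ≠ 0) → p j ∈ s ∧ P j (p j) ≠ 0 := by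
    intro j h
    have : p j = h.choose := by rw [hpdef]; simp only [dif_pos h]
    rw [this]
    exact ⟨h.choose_spec.1, h.choose_spec.2⟩
  have hinner : ∀ j : Fin M, ∑ n ∈ s, α n * P j n = t j * α (p j) := by
    intro j
    by_cases h : ∃ n ∈ s, P j n ≠ 0
    · rw [Finset.sum_eq_single (p j)
        (fun n hn hne => by
          by_contra hP
          exact hne (hrow j n hn (p j) (hps j h).1 (fun hz => hP (by rw [hz, mul_zero]))
            (hps j h).2))
        (fun hn => absurd (hps j h).1 hn)]
      rw [htdef]; simp only [if_pos h]; ring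
    · push_neg at h
      rw [Finset.sum_eq_zero (fun n hn => by rw [h n hn, mul_zero])]
      have hne : ¬∃ n ∈ s, P j n ≠ 0 := by push_neg; exact h
      rw [htdef]; simp only [if_neg hne]; ring
  have ht0 : ∀ j, 0 ≤ t j := by
    intro j; rw [htdef]; dsimp only
    split_ifs with h
    · exact h0 j (p j)
    · exact le_refl 0
  have htp : ∀ j, t j ≠ 0 → p j ∈ s := by
    intro j h
    by_cases hh : ∃ n ∈ s, P j n ≠ 0
    · exact (hps j hh).1
    · exfalso; apply h; rw [htdef]; simp only [if_neg hh]
  have hcol' : ∀ n, ∑ j ∈ Finset.univ.filter (fun j => p j = n), t j ≤ 1 := by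
    intro n
    by_cases hns : n ∈ s
    · calc ∑ j ∈ Finset.univ.filter (fun j => p j = n), t j
          ≤ ∑ j ∈ Finset.univ.filter (fun j => p j = n), P j n := by
            refine Finset.sum_le_sum (fun j hj => ?_)
            have hpj : p j = n := (Finset.mem_filter.1 hj).2
            rw [htdef]; dsimp only
            split_ifs with h
            · rw [hpj]
            · exact h0 j n
        _ ≤ ∑ j : Fin M, P j n :=
            Finset.sum_le_sum_of_subset_of_nonneg (Finset.subset_univ _)
              (fun j _ _ => h0 j n)
        _ ≤ 1 := hcolsum n hns
    · rw [Finset.sum_eq_zero (fun j hj => by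
        by_contra h
        exact hns ((Finset.mem_filter.1 hj).2 ▸ htp j h))]
      norm_num
  calc ‖∑ j : Fin M, (∑ n ∈ s, α n * P j n) • e (j : ℕ)‖
      = ‖∑ j : Fin M, (t j * α (p j)) • e (j : ℕ)‖ := by
        congr 1; exact Finset.sum_congr rfl (fun j _ => by rw [hinner j])
    _ ≤ ‖∑ n ∈ s, α n • e n‖ :=
        subst_aux he s α _ t p ht0 htp hcol' le_rfl

lemma voo (c d u v : ℝ) :
    (volume (Ioo c d ∩ Ioo u v)).toReal = max (min d v - max c u) 0 := by
  rw [Set.Ioo_inter_Ioo, Real.volume_Ioo]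
  rcases le_total (min d v - max c u) 0 with h | h
  · rw [ENNReal.ofReal_eq_zero.2 (by simpa using h), max_eq_right h]; simp
  · rw [ENNReal.toReal_ofReal (by simpa using h), max_eq_left h]

lemma sum_vol_inter_le {m : ℕ} (c d : Fin m → ℝ)
    (hdisj : Pairwise fun i j => Disjoint (Ioo (c i) (d i)) (Ioo (c j) (d j))) (u v : ℝ) :
    ∑ j : Fin m, (volume (Ioo (c j) (d j) ∩ Ioo u v)).toReal ≤ (volume (Ioo u v)).toReal := by
  have hTuv : volume (Ioo u v) ≠ ⊤ := by rw [Real.volume_Ioo]; exact ENNReal.ofReal_ne_top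
  have hfin : ∀ j : Fin m, volume (Ioo (c j) (d j) ∩ Ioo u v) ≠ ⊤ :=
    fun j => ne_top_of_le_ne_top hTuv (measure_mono inter_subset_right)
  rw [← ENNReal.toReal_sum (fun j _ => hfin j)]
  refine ENNReal.toReal_mono hTuv ?_
  rw [← measure_biUnion_finset
    (fun i _ j _ hij => ((hdisj hij).mono inter_subset_left inter_subset_left))
    (fun j _ => (measurableSet_Ioo.inter measurableSet_Ioo))]
  exact measure_mono (Set.iUnion₂_subset fun j _ => inter_subset_right)

lemma setIntegral_indicator_one (A I : Set ℝ) (hA : MeasurableSet A) :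
    ∫ x in I, A.indicator (fun _ => (1:ℝ)) x = (volume (I ∩ A)).toReal := by
  rw [MeasureTheory.integral_indicator hA, MeasureTheory.setIntegral_const,
    measureReal_def, Measure.restrict_apply hA, smul_eq_mul, mul_one, Set.inter_comm]

lemma pos_loc {c d u1 v1 u2 v2 : ℝ} (h1 : u1 < v1) (h12 : v1 ≤ u2) (h2 : u2 < v2)
    (hl : v1 - u1 = v2 - u2)
    (h : max (min d v2 - max c u2) 0 < max (min d v1 - max c u1) 0) :
    u1 < d ∧ d < v2 := by
  constructor
  · have hX : 0 < min d v1 - max c u1 := by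
      by_contra hX; push_neg at hX
      rw [max_eq_right hX] at h
      exact absurd h (not_lt.2 (le_max_right _ _))
    calc u1 ≤ max c u1 := le_max_right _ _
      _ < min d v1 := by linarith
      _ ≤ d := min_le_left _ _
  · by_contra hd; push_neg at hd
    refine absurd h (not_lt.2 ?_)
    have hmin1 : min d v1 = v1 := min_eq_right (by linarith)
    have hmin2 : min d v2 = v2 := min_eq_right hd
    rw [hmin1, hmin2]
    refine max_le_max ?_ le_rfl
    have hmax : max c u2 ≤ max c u1 + (u2 - u1) :=
      max_le (by linarith [le_max_left c u1]) (by linarith [le_max_right c u1])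
    linarith

lemma neg_loc {c d u1 v1 u2 v2 : ℝ} (h1 : u1 < v1) (h12 : v1 ≤ u2) (h2 : u2 < v2)
    (hl : v1 - u1 = v2 - u2)
    (h : max (min d v1 - max c u1) 0 < max (min d v2 - max c u2) 0) :
    u1 < c ∧ c < v2 := by
  have hY : 0 < min d v2 - max c u2 := by
    by_contra hY; push_neg at hY
    rw [max_eq_right hY] at h
    exact absurd h (not_lt.2 (le_max_right _ _))
  constructor
  · by_contra hc; push_neg at hc
    refine absurd h (not_lt.2 ?_)
    have hmax1 : max c u1 = u1 := max_eq_right hc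
    have hmax2 : max c u2 = u2 := max_eq_right (by linarith)
    rw [hmax1, hmax2]
    refine max_le_max ?_ le_rfl
    have hmin : min d v2 ≤ min d v1 + (v2 - v1) := by
      rcases le_total d v1 with h' | h'
      · rw [min_eq_left h']; linarith [min_le_left d v2]
      · rw [min_eq_right h']; linarith [min_le_right d v2]
    linarith
  · calc c ≤ max c u2 := le_max_left _ _
      _ < min d v2 := by linarith
      _ ≤ v2 := min_le_right _ _

lemma integral_f (a b : ℕ → ℝ) (s : Finset ℕ) (α : ℕ → ℝ) (c d : ℝ) :
    (∫ x in Ioo c d, ∑ n ∈ s,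
      α n * ((Set.indicator (Set.Ioo (a (2 * n)) (b (2 * n))) (fun _ => (1 : ℝ)) x -
          Set.indicator (Set.Ioo (a (2 * n + 1)) (b (2 * n + 1))) (fun _ => (1 : ℝ)) x) /
        (b (2 * n) - a (2 * n))))
    = ∑ n ∈ s, α n * (((volume (Ioo c d ∩ Ioo (a (2*n)) (b (2*n)))).toReal
        - (volume (Ioo c d ∩ Ioo (a (2*n+1)) (b (2*n+1)))).toReal) / (b (2*n) - a (2*n))) := by
  have hind : ∀ (u v : ℝ),
      Integrable (fun x => (Ioo u v).indicator (fun _ => (1:ℝ)) x) (volume.restrict (Ioo c d)) := by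
    intro u v
    rw [integrable_indicator_iff measurableSet_Ioo]
    refine integrableOn_const (ne_of_lt ?_)
    rw [Measure.restrict_apply measurableSet_Ioo]
    exact lt_of_le_of_lt (measure_mono inter_subset_left)
      (by rw [Real.volume_Ioo]; exact ENNReal.ofReal_lt_top)
  have hgeq : ∀ n : ℕ,
      (fun x => α n * ((Set.indicator (Set.Ioo (a (2 * n)) (b (2 * n))) (fun _ => (1 : ℝ)) x -
          Set.indicator (Set.Ioo (a (2 * n + 1)) (b (2 * n + 1))) (fun _ => (1 : ℝ)) x) /
        (b (2 * n) - a (2 * n))))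
      = fun x => (α n / (b (2*n) - a (2*n))) *
            (Ioo (a (2*n)) (b (2*n))).indicator (fun _ => (1:ℝ)) x
          - (α n / (b (2*n) - a (2*n))) *
            (Ioo (a (2*n+1)) (b (2*n+1))).indicator (fun _ => (1:ℝ)) x :=
    fun n => funext (fun x => by ring)
  have hint : ∀ n ∈ s,
      Integrable (fun x => α n * ((Set.indicator (Set.Ioo (a (2 * n)) (b (2 * n)))
          (fun _ => (1 : ℝ)) x -
          Set.indicator (Set.Ioo (a (2 * n + 1)) (b (2 * n + 1))) (fun _ => (1 : ℝ)) x) /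
        (b (2 * n) - a (2 * n)))) (volume.restrict (Ioo c d)) := by
    intro n _
    rw [hgeq n]
    exact ((hind _ _).const_mul _).sub ((hind _ _).const_mul _)
  rw [MeasureTheory.integral_finset_sum s hint]
  refine Finset.sum_congr rfl fun n hn => ?_
  rw [hgeq n, integral_sub ((hind _ _).const_mul _) ((hind _ _).const_mul _),
    MeasureTheory.integral_const_mul, MeasureTheory.integral_const_mul,
    setIntegral_indicator_one _ _ measurableSet_Ioo,
    setIntegral_indicator_one _ _ measurableSet_Ioo]
  ring

def Gfun (a b : ℕ → ℝ) (n : ℕ) (c d : ℝ) : ℝ :=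
  ((volume (Ioo c d ∩ Ioo (a (2*n)) (b (2*n)))).toReal
    - (volume (Ioo c d ∩ Ioo (a (2*n+1)) (b (2*n+1)))).toReal) / (b (2*n) - a (2*n))

variable {a b : ℕ → ℝ}

lemma b_le_a (hlt : ∀ n, a n < b n) (hsucc : ∀ n, b n ≤ a (n+1)) {k l : ℕ} (h : k < l) :
    b k ≤ a l := by
  have ha : Monotone a := monotone_nat_of_le_succ (fun n => (hlt n).le.trans (hsucc n))
  calc b k ≤ a (k+1) := hsucc k
    _ ≤ a l := ha h

lemma disjAB (hlt : ∀ n, a n < b n) (hsucc : ∀ n, b n ≤ a (n+1)) {k l : ℕ} (h : k ≠ l) :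
    Disjoint (Ioo (a k) (b k)) (Ioo (a l) (b l)) := by
  rcases lt_or_gt_of_ne h with h' | h'
  · exact Set.Ioo_disjoint_Ioo.2 (le_trans (min_le_left _ _)
      (le_trans (b_le_a hlt hsucc h') (le_max_right _ _)))
  · exact Set.Ioo_disjoint_Ioo.2 (le_trans (min_le_right _ _)
      (le_trans (b_le_a hlt hsucc h') (le_max_left _ _)))

-- sign localization for Gfun
lemma Gpos_loc (hlt : ∀ n, a n < b n) (hsucc : ∀ n, b n ≤ a (n+1))
    (hlen : ∀ n, b (2 * n) - a (2 * n) = b (2 * n + 1) - a (2 * n + 1))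
    {n : ℕ} {c d : ℝ} (h : 0 < Gfun a b n c d) :
    a (2*n) < d ∧ d < b (2*n+1) := by
  have hL : 0 < b (2*n) - a (2*n) := by linarith [hlt (2*n)]
  have hnum : (volume (Ioo c d ∩ Ioo (a (2*n+1)) (b (2*n+1)))).toReal
      < (volume (Ioo c d ∩ Ioo (a (2*n)) (b (2*n)))).toReal := by
    have := (div_pos_iff.1 h)
    rcases this with ⟨h1, _⟩ | ⟨_, h2⟩
    · linarith
    · linarith
  rw [voo, voo] at hnum
  exact pos_loc (hlt (2*n)) (hsucc (2*n)) (hlt (2*n+1)) (hlen n) hnum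

lemma Gneg_loc (hlt : ∀ n, a n < b n) (hsucc : ∀ n, b n ≤ a (n+1))
    (hlen : ∀ n, b (2 * n) - a (2 * n) = b (2 * n + 1) - a (2 * n + 1))
    {n : ℕ} {c d : ℝ} (h : Gfun a b n c d < 0) :
    a (2*n) < c ∧ c < b (2*n+1) := by
  have hL : 0 < b (2*n) - a (2*n) := by linarith [hlt (2*n)]
  have hnum : (volume (Ioo c d ∩ Ioo (a (2*n)) (b (2*n)))).toReal
      < (volume (Ioo c d ∩ Ioo (a (2*n+1)) (b (2*n+1)))).toReal := by
    rcases div_neg_iff.1 h with ⟨_, h2⟩ | ⟨h1, _⟩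
    · linarith
    · linarith
  rw [voo, voo] at hnum
  exact neg_loc (hlt (2*n)) (hsucc (2*n)) (hlt (2*n+1)) (hlen n) hnum

lemma hull_unique (hlt : ∀ n, a n < b n) (hsucc : ∀ n, b n ≤ a (n+1))
    {n1 n2 : ℕ} {x : ℝ} (h1 : a (2*n1) < x ∧ x < b (2*n1+1))
    (h2 : a (2*n2) < x ∧ x < b (2*n2+1)) : n1 = n2 := by
  by_contra hne
  rcases lt_or_gt_of_ne hne with h | h
  · have : b (2*n1+1) ≤ a (2*n2) := b_le_a hlt hsucc (by omega)
    linarith [h1.2, h2.1]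
  · have : b (2*n2+1) ≤ a (2*n1) := b_le_a hlt hsucc (by omega)
    linarith [h1.1, h2.2]

end Aux


lemma max_ne_zero_pos {g : ℝ} (h : max g 0 ≠ 0) : 0 < g := by
  rcases le_total g 0 with h' | h'
  · exact absurd (max_eq_right h') h
  · exact lt_of_le_of_ne h' (by rintro rfl; simp at h)

lemma upper_bound {X : Type*} [NormedAddCommGroup X] [NormedSpace ℝ X] {e : ℕ → X}
    (he : IsSymmetricBasis e) {a b : ℕ → ℝ}
    (hlt : ∀ n, a n < b n) (hsucc : ∀ n, b n ≤ a (n + 1))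
    (hlen : ∀ n, b (2 * n) - a (2 * n) = b (2 * n + 1) - a (2 * n + 1))
    (s : Finset ℕ) (α : ℕ → ℝ) {m : ℕ} (c d : Fin m → ℝ)
    (hdisj : Pairwise fun i j => Disjoint (Set.Ioo (c i) (d i)) (Set.Ioo (c j) (d j))) :
    ‖∑ j : Fin m, (∑ n ∈ s, α n * Gfun a b n (c j) (d j)) • e (j : ℕ)‖
      ≤ 2 * ‖∑ n ∈ s, α n • e n‖ := by
  classical
  have hLpos : ∀ n : ℕ, 0 < b (2*n) - a (2*n) := fun n => by linarith [hlt (2*n)]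
  set P : Fin m → ℕ → ℝ := fun j n => max (Gfun a b n (c j) (d j)) 0 with hP
  set Q : Fin m → ℕ → ℝ := fun j n => max (-(Gfun a b n (c j) (d j))) 0 with hQ
  have hsplit : ∀ (j : Fin m) (n : ℕ), Gfun a b n (c j) (d j) = P j n - Q j n := by
    intro j n
    rw [hP, hQ]
    dsimp only
    rcases le_total (Gfun a b n (c j) (d j)) 0 with h' | h'
    · rw [max_eq_right h', max_eq_left (by linarith)]; ring
    · rw [max_eq_left h', max_eq_right (by linarith)]; ring
  have hdecomp : ∑ j : Fin m, (∑ n ∈ s, α n * Gfun a b n (c j) (d j)) • e (j:ℕ)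
      = (∑ j : Fin m, (∑ n ∈ s, α n * P j n) • e (j:ℕ))
        - (∑ j : Fin m, (∑ n ∈ s, α n * Q j n) • e (j:ℕ)) := by
    rw [← Finset.sum_sub_distrib]
    refine Finset.sum_congr rfl fun j _ => ?_
    rw [← sub_smul, ← Finset.sum_sub_distrib]
    congr 1
    exact Finset.sum_congr rfl fun n _ => by rw [hsplit]; ring
  have hP0 : ∀ (j : Fin m) (n : ℕ), 0 ≤ P j n := fun j n => le_max_right _ _
  have hQ0 : ∀ (j : Fin m) (n : ℕ), 0 ≤ Q j n := fun j n => le_max_right _ _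
  have hPcol : ∀ n ∈ s, ∑ j : Fin m, P j n ≤ 1 := by
    intro n _
    have hstep : ∀ j : Fin m, P j n
        ≤ (volume (Set.Ioo (c j) (d j) ∩ Set.Ioo (a (2*n)) (b (2*n)))).toReal
            / (b (2*n) - a (2*n)) := by
      intro j
      rw [hP]; dsimp only
      apply max_le
      · rw [Gfun]
        refine (div_le_div_iff_of_pos_right (hLpos n)).2 ?_
        linarith [(ENNReal.toReal_nonneg :
          (0:ℝ) ≤ (volume (Set.Ioo (c j) (d j) ∩ Set.Ioo (a (2*n+1)) (b (2*n+1)))).toReal)]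
      · exact div_nonneg ENNReal.toReal_nonneg (le_of_lt (hLpos n))
    calc ∑ j : Fin m, P j n
        ≤ ∑ j : Fin m, (volume (Set.Ioo (c j) (d j) ∩ Set.Ioo (a (2*n)) (b (2*n)))).toReal
            / (b (2*n) - a (2*n)) := Finset.sum_le_sum (fun j _ => hstep j)
      _ = (∑ j : Fin m, (volume (Set.Ioo (c j) (d j)
            ∩ Set.Ioo (a (2*n)) (b (2*n)))).toReal) / (b (2*n) - a (2*n)) := by
          rw [Finset.sum_div]
      _ ≤ (volume (Set.Ioo (a (2*n)) (b (2*n)))).toReal / (b (2*n) - a (2*n)) := by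
          refine (div_le_div_iff_of_pos_right (hLpos n)).2 ?_
          exact sum_vol_inter_le c d hdisj _ _
      _ = 1 := by
          rw [Real.volume_Ioo, ENNReal.toReal_ofReal (le_of_lt (hLpos n)),
            div_self (ne_of_gt (hLpos n))]
  have hQcol : ∀ n ∈ s, ∑ j : Fin m, Q j n ≤ 1 := by
    intro n _
    have hstep : ∀ j : Fin m, Q j n
        ≤ (volume (Set.Ioo (c j) (d j) ∩ Set.Ioo (a (2*n+1)) (b (2*n+1)))).toReal
            / (b (2*n) - a (2*n)) := by
      intro j
      rw [hQ]; dsimp only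
      apply max_le
      · rw [Gfun, ← neg_div, neg_sub]
        refine (div_le_div_iff_of_pos_right (hLpos n)).2 ?_
        linarith [(ENNReal.toReal_nonneg :
          (0:ℝ) ≤ (volume (Set.Ioo (c j) (d j) ∩ Set.Ioo (a (2*n)) (b (2*n)))).toReal)]
      · exact div_nonneg ENNReal.toReal_nonneg (le_of_lt (hLpos n))
    calc ∑ j : Fin m, Q j n
        ≤ ∑ j : Fin m, (volume (Set.Ioo (c j) (d j) ∩ Set.Ioo (a (2*n+1)) (b (2*n+1)))).toReal
            / (b (2*n) - a (2*n)) := Finset.sum_le_sum (fun j _ => hstep j)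
      _ = (∑ j : Fin m, (volume (Set.Ioo (c j) (d j)
            ∩ Set.Ioo (a (2*n+1)) (b (2*n+1)))).toReal) / (b (2*n) - a (2*n)) := by
          rw [Finset.sum_div]
      _ ≤ (volume (Set.Ioo (a (2*n+1)) (b (2*n+1)))).toReal / (b (2*n) - a (2*n)) := by
          refine (div_le_div_iff_of_pos_right (hLpos n)).2 ?_
          exact sum_vol_inter_le c d hdisj _ _
      _ = 1 := by
          rw [Real.volume_Ioo, ENNReal.toReal_ofReal (by linarith [hlt (2*n+1)]),
            ← hlen n, div_self (ne_of_gt (hLpos n))]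
  have hProw : ∀ (j : Fin m), ∀ n1 ∈ s, ∀ n2 ∈ s, P j n1 ≠ 0 → P j n2 ≠ 0 → n1 = n2 := by
    intro j n1 _ n2 _ h1 h2
    exact hull_unique hlt hsucc
      (Gpos_loc hlt hsucc hlen (max_ne_zero_pos h1))
      (Gpos_loc hlt hsucc hlen (max_ne_zero_pos h2))
  have hQrow : ∀ (j : Fin m), ∀ n1 ∈ s, ∀ n2 ∈ s, Q j n1 ≠ 0 → Q j n2 ≠ 0 → n1 = n2 := by
    intro j n1 _ n2 _ h1 h2
    exact hull_unique hlt hsucc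
      (Gneg_loc hlt hsucc hlen (by linarith [max_ne_zero_pos h1]))
      (Gneg_loc hlt hsucc hlen (by linarith [max_ne_zero_pos h2]))
  have hPle := subst' he s α P hP0 hPcol hProw
  have hQle := subst' he s α Q hQ0 hQcol hQrow
  rw [hdecomp]
  calc ‖(∑ j : Fin m, (∑ n ∈ s, α n * P j n) • e (j:ℕ))
        - (∑ j : Fin m, (∑ n ∈ s, α n * Q j n) • e (j:ℕ))‖
      ≤ ‖∑ j : Fin m, (∑ n ∈ s, α n * P j n) • e (j:ℕ)‖
        + ‖∑ j : Fin m, (∑ n ∈ s, α n * Q j n) • e (j:ℕ)‖ := norm_sub_le _ _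
    _ ≤ 2 * ‖∑ n ∈ s, α n • e n‖ := by linarith

/-- Let `(A_n)` be successive pairwise disjoint subintervals of `[0,1]`
(`A_n = (a_n, b_n)` with `b_n ≤ a_{n+1}`), with `μ(A_{2n}) = μ(A_{2n+1})`, and let
`y_n = χ_{A_{2n}} - χ_{A_{2n+1}}`.  Then `(y_n/μ(A_{2n}))_n` is 2-equivalent to `(e_n)`:
`‖Σ α_n e_n‖_X ≤ ‖Σ α_n y_n/μ(A_{2n})‖_{JF_X} ≤ 2‖Σ α_n e_n‖_X` for all finitely
supported scalars. -/
theorem normalized_differences_two_equivalent_to_basis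
    {X : Type*} [NormedAddCommGroup X] [NormedSpace ℝ X]
    (e : ℕ → X) (he : IsSymmetricBasis e)
    (a b : ℕ → ℝ)
    (h0 : ∀ n, 0 ≤ a n) (h1 : ∀ n, b n ≤ 1)
    (hlt : ∀ n, a n < b n) (hsucc : ∀ n, b n ≤ a (n + 1))
    (hlen : ∀ n, b (2 * n) - a (2 * n) = b (2 * n + 1) - a (2 * n + 1))
    (s : Finset ℕ) (α : ℕ → ℝ) :
    ‖∑ n ∈ s, α n • e n‖ ≤
        JFNorm1 e (fun x => ∑ n ∈ s,
          α n * ((Set.indicator (Set.Ioo (a (2 * n)) (b (2 * n))) (fun _ => (1 : ℝ)) x -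
              Set.indicator (Set.Ioo (a (2 * n + 1)) (b (2 * n + 1))) (fun _ => (1 : ℝ)) x) /
            (b (2 * n) - a (2 * n)))) ∧
      JFNorm1 e (fun x => ∑ n ∈ s,
          α n * ((Set.indicator (Set.Ioo (a (2 * n)) (b (2 * n))) (fun _ => (1 : ℝ)) x -
              Set.indicator (Set.Ioo (a (2 * n + 1)) (b (2 * n + 1))) (fun _ => (1 : ℝ)) x) /
            (b (2 * n) - a (2 * n)))) ≤
        2 * ‖∑ n ∈ s, α n • e n‖ := by
  classical
  have hLpos : ∀ n : ℕ, 0 < b (2*n) - a (2*n) := fun n => by linarith [hlt (2*n)]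
  set f : ℝ → ℝ := fun y => ∑ n ∈ s,
      α n * ((Set.indicator (Set.Ioo (a (2 * n)) (b (2 * n))) (fun _ => (1 : ℝ)) y -
          Set.indicator (Set.Ioo (a (2 * n + 1)) (b (2 * n + 1))) (fun _ => (1 : ℝ)) y) /
        (b (2 * n) - a (2 * n))) with hfdef
  have hint : ∀ (c d : ℝ), (∫ y in Set.Ioo c d, f y) = ∑ n ∈ s, α n * Gfun a b n c d := by
    intro c d
    have h := integral_f a b s α c d
    unfold Gfun
    exact h
  have key : ∀ (r : ℝ), (∃ (m : ℕ) (c d : Fin m → ℝ),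
      (∀ j, 0 ≤ c j ∧ c j < d j ∧ d j ≤ 1) ∧
      (Pairwise fun i j => Disjoint (Set.Ioo (c i) (d i)) (Set.Ioo (c j) (d j))) ∧
      r = ‖∑ j : Fin m, (∫ y in Set.Ioo (c j) (d j), f y) • e (j : ℕ)‖) →
      r ≤ 2 * ‖∑ n ∈ s, α n • e n‖ := by
    rintro r ⟨m, c, d, hcd, hdisj, rfl⟩
    calc ‖∑ j : Fin m, (∫ y in Set.Ioo (c j) (d j), f y) • e (j:ℕ)‖
        = ‖∑ j : Fin m, (∑ n ∈ s, α n * Gfun a b n (c j) (d j)) • e (j:ℕ)‖ := by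
          congr 1; exact Finset.sum_congr rfl fun j _ => by rw [hint (c j) (d j)]
      _ ≤ 2 * ‖∑ n ∈ s, α n • e n‖ := upper_bound he hlt hsucc hlen s α c d hdisj
  have hmem : ∃ (m : ℕ) (c d : Fin m → ℝ),
      (∀ j, 0 ≤ c j ∧ c j < d j ∧ d j ≤ 1) ∧
      (Pairwise fun i j => Disjoint (Set.Ioo (c i) (d i)) (Set.Ioo (c j) (d j))) ∧
      ‖∑ n ∈ s, α n • e n‖ = ‖∑ j : Fin m, (∫ y in Set.Ioo (c j) (d j), f y) • e (j : ℕ)‖ := by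
    refine ⟨s.sup id + 1, fun j => a (2*(j:ℕ)), fun j => b (2*(j:ℕ)),
      fun j => ⟨h0 _, hlt _, h1 _⟩, ?_, ?_⟩
    · intro i j hij
      have hne : (i:ℕ) ≠ (j:ℕ) := fun h => hij (Fin.ext h)
      exact disjAB hlt hsucc (by omega)
    · have hval : ∀ j : Fin (s.sup id + 1),
          (∫ y in Set.Ioo (a (2*(j:ℕ))) (b (2*(j:ℕ))), f y)
            = (if (j:ℕ) ∈ s then α (j:ℕ) else 0) := by
        intro j
        rw [hint]
        have hG0 : ∀ n : ℕ, n ≠ (j:ℕ) → Gfun a b n (a (2*(j:ℕ))) (b (2*(j:ℕ))) = 0 := by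
          intro n hn
          unfold Gfun
          rw [Set.disjoint_iff_inter_eq_empty.1
              (Disjoint.symm (disjAB hlt hsucc (show 2*n ≠ 2*(j:ℕ) by omega))),
            Set.disjoint_iff_inter_eq_empty.1
              (Disjoint.symm (disjAB hlt hsucc (show 2*n+1 ≠ 2*(j:ℕ) by omega)))]
          simp
        have hGj : Gfun a b (j:ℕ) (a (2*(j:ℕ))) (b (2*(j:ℕ))) = 1 := by
          unfold Gfun
          rw [Set.inter_self,
            Set.disjoint_iff_inter_eq_empty.1
              (Disjoint.symm (disjAB hlt hsucc (show 2*(j:ℕ)+1 ≠ 2*(j:ℕ) by omega))),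
            Real.volume_Ioo, ENNReal.toReal_ofReal (le_of_lt (hLpos (j:ℕ)))]
          simp [div_self (ne_of_gt (hLpos (j:ℕ)))]
        by_cases hj : (j:ℕ) ∈ s
        · rw [if_pos hj,
            Finset.sum_eq_single (j:ℕ) (fun n _ hne => by rw [hG0 n hne, mul_zero])
              (fun h => absurd hj h), hGj, mul_one]
        · rw [if_neg hj, Finset.sum_eq_zero
            (fun n hn => by rw [hG0 n (fun h => hj (h ▸ hn)), mul_zero])]
      rw [show (∑ j : Fin (s.sup id + 1),
            (∫ y in Set.Ioo (a (2*(j:ℕ))) (b (2*(j:ℕ))), f y) • e (j:ℕ))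
          = ∑ j : Fin (s.sup id + 1), (if (j:ℕ) ∈ s then α (j:ℕ) else 0) • e (j:ℕ) from
        Finset.sum_congr rfl fun j _ => by rw [hval j]]
      congr 1
      rw [Fin.sum_univ_eq_sum_range (fun k => (if k ∈ s then α k else 0) • e k) (s.sup id + 1)]
      rw [← Finset.sum_subset
        (show s ⊆ Finset.range (s.sup id + 1) from fun n hn =>
          Finset.mem_range.2 (Nat.lt_succ_of_le (Finset.le_sup (f := id) hn)))
        (fun k _ hk => by rw [if_neg hk, zero_smul])]
      exact Finset.sum_congr rfl fun n hn => by rw [if_pos hn]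
  constructor
  · exact le_csSup ⟨2*‖∑ n ∈ s, α n • e n‖, fun r hr => key r hr⟩ hmem
  · exact csSup_le ⟨_, hmem⟩ (fun r hr => key r hr)

end
end
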